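/- Let (E,ℒ,𝒜) be a weakly left-resolving, normal labelled space, and let α ∈ ℒ^{≥1} and β ∈ ℒ^{≤∞} be such that αβ ∈ ℒ^{≤∞}. Then the gluing map G_{(α)β} : T^{(α)β} → T^{αβ} is a bijection whose inverse is the cutting map H_{[α]β} : T^{αβ} → T^{(α)β}. -/

import Mathlib

open Classical

universe u v w

/-! ## Words over an alphabet -/

/-- Finite-or-infinite words over the alphabet `A`: `Sum.inl l` is the finite word `l`
(with `[]` playing the role of the empty word `ω`), and `Sum.inr f` is the infinite word `f`. -/
abbrev Word (A : Type w) := List A ⊕ (ℕ → A)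

/-- The length `|α| ∈ ℕ∞` of a word. -/
def wlength {A : Type w} : Word A → ℕ∞ :=
  Sum.elim (fun l => (l.length : ℕ∞)) fun _ => ⊤

/-- The finite prefix `α_{1,n}` of a word `α`. -/
def wprefix {A : Type w} : Word A → ℕ → List A :=
  Sum.elim (fun l n => l.take n) fun f n => List.ofFn fun i : Fin n => f i

/-- Concatenation `αβ` of a finite word `α` with a word `β`. -/
def wappend {A : Type w} (α : List A) : Word A → Word A :=
  Sum.elim (fun l => Sum.inl (α ++ l)) fun f =>
    Sum.inr fun n => if h : n < α.length then α.get ⟨n, h⟩ else f (n - α.length)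

/-- `β` is a beginning (finite prefix) of the word `α`. -/
def WPrefix {A : Type w} (β : List A) : Word A → Prop :=
  Sum.elim (fun l => β <+: l) fun f => β = List.ofFn fun i : Fin β.length => f i

/-! ## Triples -/

/-- Formal triples `(α, X, β)` together with a zero element; the inverse semigroup `S`
of a labelled space consists of such elements. -/
inductive Tr (V : Type u) (A : Type w) where
  | zero : Tr V A
  | mk : List A → Set V → List A → Tr V A

/-- The involution `(α,A,β)* = (β,A,α)` (fixing `0`). -/
def Tr.tstar {V : Type u} {A : Type w} : Tr V A → Tr V A
  | .zero => .zero
  | .mk α X β => .mk β X α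

/-! ## Labelled spaces -/

/-- The data of a labelled space `(E, ℒ, 𝒜)`: a directed graph on nonempty vertex/edge
sets, a surjective labelling map onto the alphabet `A`, and a family `𝒜` of subsets
of the vertex set. -/
structure LblSp (V : Type u) (E : Type v) (A : Type w) where
  src : E → V
  rng : E → V
  lab : E → A
  lab_surj : Function.Surjective lab
  nonempty_V : Nonempty V
  nonempty_E : Nonempty E
  𝒜 : Set (Set V)

namespace LblSp

variable {V : Type u} {Ed : Type v} {A : Type w} (Λ : LblSp V Ed A)

/-- `α ≠ ω` is the label of some finite path of the graph. -/
def IsPathLabel (α : List A) : Prop :=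
  ∃ l : List Ed, l ≠ [] ∧ List.Chain' (fun e f => Λ.rng e = Λ.src f) l ∧ l.map Λ.lab = α

/-- `ℒ^*`: the finite labelled paths, together with the empty word. -/
def LStar : Set (List A) := {α | α = [] ∨ Λ.IsPathLabel α}

/-- `ℒ^∞`: the infinite labelled paths. -/
def LInfty : Set (ℕ → A) :=
  {f | ∃ e : ℕ → Ed, (∀ n, Λ.rng (e n) = Λ.src (e (n + 1))) ∧ ∀ n, Λ.lab (e n) = f n}

/-- `ℒ^{≤∞} = ℒ^* ∪ ℒ^∞`, as a predicate on `Word A`. -/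
def IsWordW : Word A → Prop := Sum.elim (· ∈ Λ.LStar) (· ∈ Λ.LInfty)

/-- The relative range `r(X, α)` (with `r(X, ω) = X`). -/
noncomputable def relRange (X : Set V) (α : List A) : Set V :=
  if α = [] then X
  else {v | ∃ (l : List Ed) (h : l ≠ []), List.Chain' (fun e f => Λ.rng e = Λ.src f) l ∧
        l.map Λ.lab = α ∧ Λ.src (l.head h) ∈ X ∧ Λ.rng (l.getLast h) = v}

/-- The range `r(α) = r(E⁰, α)`. -/
noncomputable def rangeL (α : List A) : Set V := Λ.relRange Set.univ α

/-- `𝒜^α = {X ∈ 𝒜 : X ⊆ r(α)}`. -/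
noncomputable def Aset (α : List A) : Set (Set V) := {X | X ∈ Λ.𝒜 ∧ X ⊆ Λ.rangeL α}

/-- `(E, ℒ, 𝒜)` is a labelled space: `𝒜` is closed under finite intersections and
unions, contains all ranges `r(α)` for `α ∈ ℒ^{≥1}`, and is closed under relative ranges. -/
structure IsLS : Prop where
  inter_mem : ∀ X ∈ Λ.𝒜, ∀ Y ∈ Λ.𝒜, X ∩ Y ∈ Λ.𝒜
  union_mem : ∀ X ∈ Λ.𝒜, ∀ Y ∈ Λ.𝒜, X ∪ Y ∈ Λ.𝒜
  range_mem : ∀ α ∈ Λ.LStar, α ≠ [] → Λ.rangeL α ∈ Λ.𝒜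
  relRange_mem : ∀ X ∈ Λ.𝒜, ∀ α ∈ Λ.LStar, Λ.relRange X α ∈ Λ.𝒜

/-- A weakly left-resolving labelled space. -/
structure IsWLR : Prop where
  toIsLS : Λ.IsLS
  wlr : ∀ X ∈ Λ.𝒜, ∀ Y ∈ Λ.𝒜, ∀ α ∈ Λ.LStar, α ≠ [] →
    Λ.relRange (X ∩ Y) α = Λ.relRange X α ∩ Λ.relRange Y α

/-- A weakly left-resolving normal labelled space. -/
structure IsNormal : Prop where
  toIsWLR : Λ.IsWLR
  sdiff_mem : ∀ X ∈ Λ.𝒜, ∀ Y ∈ Λ.𝒜, X \ Y ∈ Λ.𝒜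

/-! ## The inverse semigroup `S` -/

/-- The underlying set of the inverse semigroup
`S = {(α,A,β) : α, β ∈ ℒ^*, A ∈ 𝒜^α ∩ 𝒜^β, A ≠ ∅} ∪ {0}`. -/
def SSet : Set (Tr V A) :=
  {t | t = Tr.zero ∨ ∃ α X β, t = Tr.mk α X β ∧ α ∈ Λ.LStar ∧ β ∈ Λ.LStar ∧
    X ∈ Λ.Aset α ∧ X ∈ Λ.Aset β ∧ X.Nonempty}

/-- The semilattice of idempotents `E(S) = {(α,A,α)} ∪ {0}`. -/
def ESet : Set (Tr V A) :=
  {t | t = Tr.zero ∨ ∃ α X, t = Tr.mk α X α ∧ α ∈ Λ.LStar ∧ X ∈ Λ.Aset α ∧ X.Nonempty}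

/-- The product of `S`. -/
noncomputable def tmul : Tr V A → Tr V A → Tr V A
  | Tr.zero, _ => Tr.zero
  | Tr.mk _ _ _, Tr.zero => Tr.zero
  | Tr.mk α X β, Tr.mk γ Y δ =>
    if β <+: γ ∧ (Λ.relRange X (γ.drop β.length) ∩ Y).Nonempty then
      Tr.mk (α ++ γ.drop β.length) (Λ.relRange X (γ.drop β.length) ∩ Y) δ
    else if γ <+: β ∧ (X ∩ Λ.relRange Y (β.drop γ.length)).Nonempty then
      Tr.mk α (X ∩ Λ.relRange Y (β.drop γ.length)) (δ ++ β.drop γ.length)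
    else Tr.zero

/-! ## Filters in `E(S)`, characters, and the tight spectrum -/

/-- A filter in `E(S)`: a nonempty subset of `E(S) ∖ {0}` closed under products and
upward closed in the natural order (`p ≤ q ↔ pq = p`). -/
def IsFilterES (ξ : Set (Tr V A)) : Prop :=
  ξ.Nonempty ∧ (∀ t ∈ ξ, t ∈ Λ.ESet ∧ t ≠ Tr.zero) ∧
  (∀ p ∈ ξ, ∀ q ∈ ξ, Λ.tmul p q ∈ ξ) ∧
  (∀ p ∈ ξ, ∀ q ∈ Λ.ESet, Λ.tmul p q = p → q ∈ ξ)

/-- An ultrafilter in `E(S)`. -/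
def IsUltraES (ξ : Set (Tr V A)) : Prop :=
  Λ.IsFilterES ξ ∧ ∀ ζ, Λ.IsFilterES ζ → ξ ⊆ ζ → ξ = ζ

/-- The character (indicator function) of a filter. -/
noncomputable def charOf (_Λ : LblSp V Ed A) (ξ : Set (Tr V A)) : Tr V A → Bool :=
  fun t => if t ∈ ξ then true else false

/-- A character of `E(S)`: a nonzero, zero- and meet-preserving `{0,1}`-valued map on
`E(S)` (encoded as a map on triples vanishing outside `E(S)`). -/
def IsChar (φ : Tr V A → Bool) : Prop :=
  (∃ e, φ e = true) ∧ (∀ e, e ∉ Λ.ESet → φ e = false) ∧ φ Tr.zero = false ∧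
  ∀ e ∈ Λ.ESet, ∀ f ∈ Λ.ESet, φ (Λ.tmul e f) = (φ e && φ f)

/-- The tight spectrum `Ê_tight`: the closure, within the space of characters with the
topology of pointwise convergence, of the set of characters of ultrafilters. -/
def tightSpectrum : Set (Tr V A → Bool) :=
  {φ | Λ.IsChar φ} ∩ closure {φ | ∃ ξ, Λ.IsUltraES ξ ∧ φ = Λ.charOf ξ}

/-- A tight filter: a filter whose character lies in the tight spectrum. -/
def IsTightFilter (ξ : Set (Tr V A)) : Prop :=
  Λ.IsFilterES ξ ∧ Λ.charOf ξ ∈ Λ.tightSpectrum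

/-- `ξ_{|β|} = {B : (β, B, β) ∈ ξ}`, the filter of `ξ` at level `β`. -/
def filterAt (_Λ : LblSp V Ed A) (ξ : Set (Tr V A)) (β : List A) : Set (Set V) :=
  {B | Tr.mk β B β ∈ ξ}

/-- `α` is the word associated with the filter `ξ` (i.e. `ξ = ξ^α`): the nonempty finite
beginnings of `α` are exactly the words appearing in elements of `ξ`. -/
def HasWord (_Λ : LblSp V Ed A) (ξ : Set (Tr V A)) (α : Word A) : Prop :=
  ∀ β : List A, β ≠ [] → ((∃ B, Tr.mk β B β ∈ ξ) ↔ WPrefix β α)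

/-! ## Filters and ultrafilters in `𝒜^β` -/

/-- A filter in the Boolean algebra `𝒜^β`. -/
def IsFilterAset (β : List A) (F : Set (Set V)) : Prop :=
  F.Nonempty ∧ F ⊆ Λ.Aset β ∧ (∀ X ∈ F, X.Nonempty) ∧
  (∀ X ∈ F, ∀ Y ∈ F, X ∩ Y ∈ F) ∧ (∀ X ∈ F, ∀ Y ∈ Λ.Aset β, X ⊆ Y → Y ∈ F)

/-- An ultrafilter in `𝒜^β` (an element of `X_β`). -/
def IsUltraAset (β : List A) (F : Set (Set V)) : Prop :=
  Λ.IsFilterAset β F ∧ ∀ G, Λ.IsFilterAset β G → F ⊆ G → F = G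

/-- The gluing map `g_{(α)β}(F) = {C ∩ r(αβ) : C ∈ F}` on ultrafilters. -/
noncomputable def gmap (α β : List A) (F : Set (Set V)) : Set (Set V) :=
  {X | ∃ C ∈ F, X = C ∩ Λ.rangeL (α ++ β)}

/-- The cutting map `h_{[α]β}(F) = {C ∈ 𝒜^β : D ⊆ C for some D ∈ F}` on ultrafilters. -/
noncomputable def hmap (α β : List A) (F : Set (Set V)) : Set (Set V) :=
  {C | C ∈ Λ.Aset β ∧ ∃ D ∈ F, D ⊆ C}

/-! ## Cutting and gluing of (tight) filters in `E(S)` -/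

/-- The cutting map `H_{[α]β} : T^{αβ} → T^{(α)β}` (word-free formulation): the filter
whose family is `η_n = h_{[α]β_{1,n}}(ξ_{n+|α|})`; `H_{[ω]β}` is the identity. -/
noncomputable def Hcut (α : List A) (ξ : Set (Tr V A)) : Set (Tr V A) :=
  if α = [] then ξ
  else {t | ∃ δ B, t = Tr.mk δ B δ ∧ B ∈ Λ.Aset δ ∧
        ∃ D, Tr.mk (α ++ δ) D (α ++ δ) ∈ ξ ∧ D ⊆ B}

/-- The gluing map `G_{(α)β} : T^{(α)β} → T^{αβ}` (word-free formulation): the filter with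
family `η_{|α|+n} = g_{(α)β_{1,n}}(ξ_n)` for `n ≥ 1` and `η_i = f_{α_{1,i}[…]}(…)` for
`i ≤ |α|`, with the two cases according to whether the word of `ξ` is empty (`β = ω`)
or not; `G_{(ω)β}` is the identity. -/
noncomputable def Gglue (α : List A) (ξ : Set (Tr V A)) : Set (Tr V A) :=
  if α = [] then ξ
  else if ∃ (δ : List A) (B : Set V), δ ≠ [] ∧ Tr.mk δ B δ ∈ ξ then
    {t | ∃ δ B, t = Tr.mk δ B δ ∧
      ((α <+: δ ∧ α ≠ δ ∧ ∃ C, Tr.mk (δ.drop α.length) C (δ.drop α.length) ∈ ξ ∧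
          B = C ∩ Λ.rangeL δ) ∨
       (δ <+: α ∧ B ∈ Λ.Aset δ ∧ ∃ (b : A) (C : Set V), Tr.mk [b] C [b] ∈ ξ ∧
          Λ.relRange B (α.drop δ.length ++ [b]) = C ∩ Λ.rangeL (α ++ [b])))}
  else
    {t | ∃ δ B, t = Tr.mk δ B δ ∧ δ <+: α ∧ B ∈ Λ.Aset δ ∧
      ∃ C, Tr.mk [] C [] ∈ ξ ∧ Λ.relRange B (α.drop δ.length) = C ∩ Λ.rangeL α}

/-- `T^β`: the set of tight filters with associated word `β`. -/
def TWord (β : Word A) : Set (Set (Tr V A)) :=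
  {ξ | Λ.IsTightFilter ξ ∧ Λ.HasWord ξ β}

/-- `T^{(α)β} = {ξ ∈ T^β : r(α) ∈ ξ_0}` (equal to `T^β` when `α = ω`), the domain of the
gluing map `G_{(α)β}`. -/
def TGlueDom (α : List A) (β : Word A) : Set (Set (Tr V A)) :=
  {ξ | Λ.IsTightFilter ξ ∧ Λ.HasWord ξ β ∧ (α ≠ [] → Tr.mk [] (Λ.rangeL α) [] ∈ ξ)}

/-! ## The groupoid `Γ` -/

/-- The defining relation of
`Γ = {(ξ^{aγ}, |a|-|b|, η^{bγ}) ∈ T × ℤ × T : H_{[a]γ}(ξ^{aγ}) = H_{[b]γ}(η^{bγ})}`. -/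
def InGamma (η : Set (Tr V A)) (m : ℤ) (ξ : Set (Tr V A)) : Prop :=
  ∃ (a b : List A) (γ : Word A), a ∈ Λ.LStar ∧ b ∈ Λ.LStar ∧ Λ.IsWordW γ ∧
    η ∈ Λ.TWord (wappend a γ) ∧ ξ ∈ Λ.TWord (wappend b γ) ∧
    m = (a.length : ℤ) - (b.length : ℤ) ∧ Λ.Hcut a η = Λ.Hcut b ξ

/-- `Γ` as a set of raw triples. -/
def GammaRaw : Set (Set (Tr V A) × ℤ × Set (Tr V A)) :=
  {p | Λ.InGamma p.1 p.2.1 p.2.2}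

/-- The basic set `Z_{s,e:e₁,…,eₙ}` of `Γ` (raw version), for `s = (μ, X, ν)`:
triples `(η^{μγ}, |μ|-|ν|, ξ^{νγ}) ∈ Γ` with `e ∈ ξ`, `eᵢ ∉ ξ` and
`H_{[μ]γ}(η) = H_{[ν]γ}(ξ)`. -/
noncomputable def ZrawGen (μ ν : List A) (e : Tr V A) (es : List (Tr V A)) :
    Set (Set (Tr V A) × ℤ × Set (Tr V A)) :=
  {p | Λ.InGamma p.1 p.2.1 p.2.2 ∧ p.2.1 = (μ.length : ℤ) - (ν.length : ℤ) ∧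
       e ∈ p.2.2 ∧ (∀ f ∈ es, f ∉ p.2.2) ∧
       ∃ γ : Word A, Λ.HasWord p.1 (wappend μ γ) ∧ Λ.HasWord p.2.2 (wappend ν γ) ∧
         Λ.Hcut μ p.1 = Λ.Hcut ν p.2.2}

/-- `Z_s = Z_{s, s*s}` for `s = (μ, X, ν)` (raw version). -/
noncomputable def Zraw (μ : List A) (X : Set V) (ν : List A) :
    Set (Set (Tr V A) × ℤ × Set (Tr V A)) :=
  Λ.ZrawGen μ ν (Tr.mk ν X ν) []

/-- The basic set `V_{e:e₁,…,eₙ} = U_{e:e₁,…,eₙ} ∩ T` of the tight filter space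
(raw version). -/
def VrawGen (e : Tr V A) (es : List (Tr V A)) : Set (Set (Tr V A)) :=
  {ξ | Λ.IsTightFilter ξ ∧ e ∈ ξ ∧ ∀ f ∈ es, f ∉ ξ}

/-- The shift map `σ : T^{(1)} → T`, `σ(ξ^{aγ}) = H_{[a]γ}(ξ^{aγ})` (extended by the
identity off its domain). -/
noncomputable def sigmaMap (ξ : Set (Tr V A)) : Set (Tr V A) :=
  if h : ∃ a : A, ∃ B : Set V, Tr.mk [a] B [a] ∈ ξ then Λ.Hcut [h.choose] ξ else ξ

/-- The Renault–Deaconu basic set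
`𝒱(X, Y, m, n) = {(η, m-n, ξ) ∈ Γ : (η, ξ) ∈ X × Y, σ^m(η) = σ^n(ξ)}` (raw version). -/
noncomputable def VrdRaw (Xs Ys : Set (Set (Tr V A))) (m n : ℕ) :
    Set (Set (Tr V A) × ℤ × Set (Tr V A)) :=
  {p | Λ.InGamma p.1 p.2.1 p.2.2 ∧ p.2.1 = (m : ℤ) - (n : ℤ) ∧
       p.1 ∈ Xs ∧ p.2.2 ∈ Ys ∧ (Λ.sigmaMap)^[m] p.1 = (Λ.sigmaMap)^[n] p.2.2}

/-! ## The groupoid of germs `𝒢_tight` -/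

/-- The action `θ_s(φ)(e) = φ(s* e s)` of `S` on characters. -/
noncomputable def theta (s : Tr V A) (φ : Tr V A → Bool) : Tr V A → Bool :=
  fun e => if e ∈ Λ.ESet then φ (Λ.tmul (Λ.tmul (Tr.tstar s) e) s) else false

/-- `Ω = {(s, φ) ∈ S × Ê_tight : φ ∈ D_{s*s}}`. -/
noncomputable def Omega : Set (Tr V A × (Tr V A → Bool)) :=
  {p | p.1 ∈ Λ.SSet ∧ p.2 ∈ Λ.tightSpectrum ∧ p.2 (Λ.tmul (Tr.tstar p.1) p.1) = true}

/-- The germ equivalence relation on `Ω`: `(s,φ) ∼ (t,ψ)` iff `φ = ψ` and there is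
`e ∈ E(S)` with `φ(e) = 1` and `se = te`. -/
noncomputable def germEquiv (p q : Tr V A × (Tr V A → Bool)) : Prop :=
  p.2 = q.2 ∧ ∃ e ∈ Λ.ESet, p.2 e = true ∧ Λ.tmul p.1 e = Λ.tmul q.1 e

/-- The map `Φ` at the level of `Ω`: for `t = (β, X, γ)` and `φ` with filter `ξ^α`
(where `α = γα'`), `Φ[t,φ] = ((G_{(β)α'} ∘ H_{[γ]α'})(ξ^α), |β|-|γ|, ξ^α)`. -/
noncomputable def PhiRaw : Tr V A → (Tr V A → Bool) → Set (Tr V A) × ℤ × Set (Tr V A)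
  | Tr.zero, _ => (∅, 0, ∅)
  | Tr.mk β _ γ, φ =>
      (Λ.Gglue β (Λ.Hcut γ {e | φ e = true}), (β.length : ℤ) - (γ.length : ℤ),
        {e | φ e = true})

/-! ## Miscellaneous notions -/

/-- `ℒ(XE¹) = {ℒ(e) : e ∈ E¹, s(e) ∈ X}`. -/
def labE (X : Set V) : Set A := {a | ∃ e, Λ.lab e = a ∧ Λ.src e ∈ X}

/-- The set `E⁰_sink` of sinks. -/
def sinks : Set V := {v | ∀ e, Λ.src e ≠ v}

/-- The filter in `E(S)` associated with a pair (word, complete family). -/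
def pairFilter (_Λ : LblSp V Ed A) (α : Word A) (F : ℕ → Set (Set V)) : Set (Tr V A) :=
  {t | ∃ (n : ℕ) (B : Set V), (n : ℕ∞) ≤ wlength α ∧ B ∈ F n ∧
    t = Tr.mk (wprefix α n) B (wprefix α n)}

/-- A complete family for the word `α`: `F n` is a filter in `𝒜^{α_{1,n}}` for
`1 ≤ n ≤ |α|` (`F 0` is a filter in `𝒜` or empty, and a filter if `α = ω`), and
`F n = {X ∈ 𝒜^{α_{1,n}} : r(X, α_{n+1}) ∈ F (n+1)}` for all `n < |α|`. -/
noncomputable def IsCompleteFamily (α : Word A) (F : ℕ → Set (Set V)) : Prop :=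
  Λ.IsWordW α ∧
  (∀ n : ℕ, 1 ≤ n → (n : ℕ∞) ≤ wlength α → Λ.IsFilterAset (wprefix α n) (F n)) ∧
  (F 0 = ∅ ∨ Λ.IsFilterAset [] (F 0)) ∧
  (wlength α = 0 → Λ.IsFilterAset [] (F 0)) ∧
  (∀ n : ℕ, ((n + 1 : ℕ) : ℕ∞) ≤ wlength α →
    F n = {X | X ∈ Λ.Aset (wprefix α n) ∧
      Λ.relRange X ((wprefix α (n + 1)).drop n) ∈ F (n + 1)})

/-! ## The tight filter space `T` and the groupoid `Γ` as types -/

/-- The space `T` of tight filters. -/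
structure TightT where
  carrier : Set (Tr V A)
  tight : Λ.IsTightFilter carrier

/-- The topology of `T`, induced from pointwise convergence of characters. -/
noncomputable instance : TopologicalSpace Λ.TightT :=
  TopologicalSpace.induced (fun ξ => Λ.charOf ξ.carrier) inferInstance

/-- The groupoid `Γ ⊆ T × ℤ × T` as a type. -/
structure GammaT where
  fst : Λ.TightT
  mid : ℤ
  lst : Λ.TightT
  mem : Λ.InGamma fst.carrier mid lst.carrier

/-- The raw triple underlying an element of `Γ`. -/
def rawOf (p : Λ.GammaT) : Set (Tr V A) × ℤ × Set (Tr V A) :=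
  (p.fst.carrier, p.mid, p.lst.carrier)

/-- The collection of all sets `Z_{s,e:e₁,…,eₙ}` (for `s ∈ S`, `e, eᵢ ∈ E(S)`),
as subsets of `Γ`. -/
noncomputable def ZBasisT : Set (Set Λ.GammaT) :=
  {Z | ∃ (μ : List A) (X : Set V) (ν : List A) (e : Tr V A) (es : List (Tr V A)),
    Tr.mk μ X ν ∈ Λ.SSet ∧ e ∈ Λ.ESet ∧ (∀ f ∈ es, f ∈ Λ.ESet) ∧
    Z = {p : Λ.GammaT | Λ.rawOf p ∈ Λ.ZrawGen μ ν e es}}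

/-- The topology on `Γ` induced by the isomorphism `Φ` from the germ topology of
`𝒢_tight`, generated by the images of the basic sets `Θ(s, 𝒰)` with `𝒰 ⊆ D_{s*s}`
open in the tight spectrum. -/
noncomputable def PhiTopology : TopologicalSpace Λ.GammaT :=
  TopologicalSpace.generateFrom
    {Z | ∃ (s : Tr V A) (U : Set (Tr V A → Bool)), s ∈ Λ.SSet ∧
      (∃ W, IsOpen W ∧ U = W ∩ Λ.tightSpectrum) ∧
      (∀ φ ∈ U, φ (Λ.tmul (Tr.tstar s) s) = true) ∧
      Z = {p : Λ.GammaT | ∃ φ ∈ U, (s, φ) ∈ Λ.Omega ∧ Λ.PhiRaw s φ = Λ.rawOf p}}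

end LblSp


open List

namespace LblSp

variable {V : Type u} {Ed : Type v} {A : Type w} (Λ : LblSp V Ed A)

@[simp] lemma relRange_nil (X : Set V) : Λ.relRange X [] = X := if_pos rfl

lemma mem_relRange {σ : List A} (hσ : σ ≠ []) {X : Set V} {v : V} :
    v ∈ Λ.relRange X σ ↔ ∃ (l : List Ed) (h : l ≠ []),
      List.Chain' (fun e f => Λ.rng e = Λ.src f) l ∧ l.map Λ.lab = σ ∧
      Λ.src (l.head h) ∈ X ∧ Λ.rng (l.getLast h) = v := by
  rw [relRange, if_neg hσ]; exact Iff.rfl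

lemma relRange_mono {X Y : Set V} (h : X ⊆ Y) (σ : List A) :
    Λ.relRange X σ ⊆ Λ.relRange Y σ := by
  rcases eq_or_ne σ [] with rfl | hσ
  · simpa using h
  · intro v hv
    rw [Λ.mem_relRange hσ] at hv ⊢
    obtain ⟨l, hl, h1, h2, h3, h4⟩ := hv
    exact ⟨l, hl, h1, h2, h h3, h4⟩

lemma relRange_append (X : Set V) (σ τ : List A) :
    Λ.relRange X (σ ++ τ) = Λ.relRange (Λ.relRange X σ) τ := by
  rcases eq_or_ne σ [] with rfl | hσ
  · simp
  rcases eq_or_ne τ [] with rfl | hτ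
  · simp
  have hστ : σ ++ τ ≠ [] := by simp [hσ]
  ext v
  rw [Λ.mem_relRange hστ, Λ.mem_relRange hτ]
  constructor
  · rintro ⟨l, hl, hch, hmap, hsrc, hrng⟩
    have hlenl : l.length = σ.length + τ.length := by
      have := congrArg List.length hmap; simpa using this
    have hl₁ne : l.take σ.length ≠ [] := by
      have : (l.take σ.length).length = σ.length := by
        rw [List.length_take]; omega
      intro h; rw [h] at this; simp at this
      exact hσ (List.length_eq_zero_iff.mp this.symm)
    have hl₂ne : l.drop σ.length ≠ [] := by
      have : (l.drop σ.length).length = τ.length := by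
        rw [List.length_drop]; omega
      intro h; rw [h] at this; simp at this
      exact hτ (List.length_eq_zero_iff.mp this.symm)
    have happ : l.take σ.length ++ l.drop σ.length = l := List.take_append_drop _ _
    have hch' : List.Chain' (fun e f => Λ.rng e = Λ.src f)
        (l.take σ.length ++ l.drop σ.length) := by rw [happ]; exact hch
    unfold List.Chain' at hch'; rw [List.isChain_append] at hch'
    refine ⟨l.drop σ.length, hl₂ne, hch'.2.1, ?_, ?_, ?_⟩
    · rw [List.map_drop, hmap, ← List.take_left (l₁ := σ) (l₂ := τ)]
      simp [List.take_left]
    · rw [Λ.mem_relRange hσ]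
      refine ⟨l.take σ.length, hl₁ne, hch'.1, ?_, ?_, ?_⟩
      · rw [List.map_take, hmap, List.take_left]
      · rw [List.head_take hl₁ne]; exact hsrc
      · exact hch'.2.2 _ (List.getLast?_eq_getLast hl₁ne ▸ rfl) _
          (List.head?_eq_head hl₂ne ▸ rfl)
    · rw [List.getLast_drop hl₂ne]; exact hrng
  · rintro ⟨l₂, hl₂, hch₂, hmap₂, hsrc₂, hrng₂⟩
    rw [Λ.mem_relRange hσ] at hsrc₂
    obtain ⟨l₁, hl₁, hch₁, hmap₁, hsrc₁, hrng₁⟩ := hsrc₂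
    have hne : l₁ ++ l₂ ≠ [] := by simp [hl₁]
    refine ⟨l₁ ++ l₂, hne, ?_, by simp [hmap₁, hmap₂], ?_, ?_⟩
    · unfold List.Chain'; rw [List.isChain_append]
      refine ⟨hch₁, hch₂, ?_⟩
      intro x hx y hy
      rw [List.getLast?_eq_getLast hl₁] at hx
      rw [List.head?_eq_head hl₂] at hy
      simp at hx hy; subst hx; subst hy
      rw [hrng₁]
    · rw [List.head_append_of_ne_nil hl₁]; exact hsrc₁
    · rw [List.getLast_append]
      simp only [List.isEmpty_iff, hl₂, dite_false]
      exact hrng₂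

lemma relRange_subset_rangeL (X : Set V) (σ : List A) :
    Λ.relRange X σ ⊆ Λ.rangeL σ := Λ.relRange_mono (Set.subset_univ X) σ

lemma rangeL_append (σ τ : List A) :
    Λ.rangeL (σ ++ τ) = Λ.relRange (Λ.rangeL σ) τ := Λ.relRange_append _ σ τ

lemma rangeL_append_subset (σ τ : List A) : Λ.rangeL (σ ++ τ) ⊆ Λ.rangeL τ := by
  rw [Λ.rangeL_append]; exact Λ.relRange_subset_rangeL _ τ

lemma nonempty_of_relRange {X : Set V} {σ : List A}
    (h : (Λ.relRange X σ).Nonempty) : X.Nonempty := by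
  rcases eq_or_ne σ [] with rfl | hσ
  · simpa using h
  · obtain ⟨v, hv⟩ := h
    rw [Λ.mem_relRange hσ] at hv
    obtain ⟨l, hl, _, _, h3, _⟩ := hv
    exact ⟨_, h3⟩

lemma nil_mem_LStar : ([] : List A) ∈ Λ.LStar := Or.inl rfl

lemma mem_LStar_of_rangeL_nonempty {σ : List A} (h : (Λ.rangeL σ).Nonempty) :
    σ ∈ Λ.LStar := by
  rcases eq_or_ne σ [] with rfl | hσ
  · exact Λ.nil_mem_LStar
  · obtain ⟨v, hv⟩ := h
    rw [rangeL, Λ.mem_relRange hσ] at hv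
    obtain ⟨l, hl, h1, h2, _, _⟩ := hv
    exact Or.inr ⟨l, hl, h1, h2⟩

lemma rangeL_nonempty_of_mem {σ : List A} (h : σ ∈ Λ.LStar) :
    (Λ.rangeL σ).Nonempty := by
  rcases h with rfl | ⟨l, hl, h1, h2⟩
  · obtain ⟨v⟩ := Λ.nonempty_V
    exact ⟨v, by simp [rangeL]⟩
  · have hσ : l.map Λ.lab ≠ [] := by simpa using hl
    refine ⟨Λ.rng (l.getLast hl), ?_⟩
    rw [rangeL, Λ.mem_relRange (h2 ▸ hσ)]
    exact ⟨l, hl, h1, h2, trivial, rfl⟩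

lemma mem_LStar_of_subset {σ : List A} {B : Set V} (hB : B.Nonempty)
    (h : B ⊆ Λ.rangeL σ) : σ ∈ Λ.LStar :=
  Λ.mem_LStar_of_rangeL_nonempty (hB.mono h)

lemma prefix_mem_LStar {σ τ : List A} (h : σ ∈ Λ.LStar) (hp : τ <+: σ) :
    τ ∈ Λ.LStar := by
  obtain ⟨ρ, rfl⟩ := hp
  have := Λ.rangeL_nonempty_of_mem h
  rw [Λ.rangeL_append] at this
  exact Λ.mem_LStar_of_rangeL_nonempty (Λ.nonempty_of_relRange this)

lemma suffix_mem_LStar {σ τ : List A} (h : σ ∈ Λ.LStar) (hp : τ <:+ σ) :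
    τ ∈ Λ.LStar := by
  obtain ⟨ρ, rfl⟩ := hp
  have := Λ.rangeL_nonempty_of_mem h
  exact Λ.mem_LStar_of_rangeL_nonempty (this.mono (Λ.rangeL_append_subset ρ τ))

lemma drop_mem_LStar {σ : List A} (h : σ ∈ Λ.LStar) (n : ℕ) :
    σ.drop n ∈ Λ.LStar := Λ.suffix_mem_LStar h (List.drop_suffix n σ)

lemma relRange_mem_A (hLS : Λ.IsLS) {X : Set V} (hX : X ∈ Λ.𝒜) {σ : List A}
    (hσ : σ ∈ Λ.LStar) : Λ.relRange X σ ∈ Λ.𝒜 := hLS.relRange_mem X hX σ hσ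

end LblSp

namespace LblSp

variable {V : Type u} {Ed : Type v} {A : Type w} (Λ : LblSp V Ed A)

@[simp] lemma rangeL_nil : Λ.rangeL ([] : List A) = Set.univ := by
  simp [rangeL]

lemma mem_Aset {σ : List A} {B : Set V} :
    B ∈ Λ.Aset σ ↔ B ∈ Λ.𝒜 ∧ B ⊆ Λ.rangeL σ := Iff.rfl

lemma mk_mem_ESet {δ : List A} {B : Set V} (h1 : δ ∈ Λ.LStar) (h2 : B ∈ Λ.𝒜)
    (h3 : B ⊆ Λ.rangeL δ) (h4 : B.Nonempty) : Tr.mk δ B δ ∈ Λ.ESet :=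
  Or.inr ⟨δ, B, rfl, h1, ⟨h2, h3⟩, h4⟩

lemma tmul_diag_if₁ {δ ε : List A} (B C : Set V) (h : δ <+: ε) :
    Λ.tmul (Tr.mk δ B δ) (Tr.mk ε C ε) =
      if (Λ.relRange B (ε.drop δ.length) ∩ C).Nonempty then
        Tr.mk ε (Λ.relRange B (ε.drop δ.length) ∩ C) ε else Tr.zero := by
  obtain ⟨ρ, rfl⟩ := h
  show (if _ then _ else _) = _
  by_cases hne : (Λ.relRange B ((δ ++ ρ).drop δ.length) ∩ C).Nonempty
  · rw [if_pos ⟨⟨ρ, rfl⟩, hne⟩, if_pos hne, List.drop_left]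
  · rw [if_neg (fun hc => hne hc.2), if_neg hne]
    rcases eq_or_ne ρ [] with rfl | hρ
    · rw [if_neg]
      rintro ⟨-, hc⟩
      apply hne
      simp only [List.append_nil] at hc ⊢
      simpa [Set.inter_comm] using hc
    · rw [if_neg]
      rintro ⟨hc, -⟩
      have := hc.length_le
      rw [List.length_append] at this
      exact hρ (List.length_eq_zero_iff.mp (by omega))

lemma tmul_diag_if₂ {δ ε : List A} (B C : Set V) (h : ε <+: δ) :
    Λ.tmul (Tr.mk δ B δ) (Tr.mk ε C ε) =
      if (B ∩ Λ.relRange C (δ.drop ε.length)).Nonempty then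
        Tr.mk δ (B ∩ Λ.relRange C (δ.drop ε.length)) δ else Tr.zero := by
  rcases eq_or_ne ε δ with rfl | hne
  · rw [Λ.tmul_diag_if₁ B C (List.prefix_refl ε)]
    simp
  · obtain ⟨ρ, rfl⟩ := h
    have hρ : ρ ≠ [] := by rintro rfl; simp at hne
    show (if _ then _ else _) = _
    rw [if_neg, List.drop_left]
    · by_cases h2 : (B ∩ Λ.relRange C ρ).Nonempty
      · rw [if_pos ⟨⟨ρ, rfl⟩, h2⟩, if_pos h2]
      · rw [if_neg (fun hc => h2 hc.2), if_neg h2]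
    · rintro ⟨hc, -⟩
      have := hc.length_le
      rw [List.length_append] at this
      exact hρ (List.length_eq_zero_iff.mp (by omega))

lemma tmul_diag_zero {δ ε : List A} (B C : Set V) (h1 : ¬δ <+: ε) (h2 : ¬ε <+: δ) :
    Λ.tmul (Tr.mk δ B δ) (Tr.mk ε C ε) = Tr.zero := by
  show (if _ then _ else _) = _
  rw [if_neg (fun hc => h1 hc.1), if_neg (fun hc => h2 hc.1)]

section Filters

variable {Λ} {ξ : Set (Tr V A)} (hξ : Λ.IsFilterES ξ)
include hξ

lemma zero_not_mem : Tr.zero ∉ ξ := fun h => (hξ.2.1 _ h).2 rfl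

lemma mem_elim {t : Tr V A} (ht : t ∈ ξ) :
    ∃ δ B, t = Tr.mk δ B δ ∧ δ ∈ Λ.LStar ∧ B ∈ Λ.𝒜 ∧ B ⊆ Λ.rangeL δ ∧ B.Nonempty := by
  obtain ⟨hE, hz⟩ := hξ.2.1 _ ht
  rcases hE with rfl | ⟨δ, B, rfl, h1, h2, h3⟩
  · exact absurd rfl hz
  · exact ⟨δ, B, rfl, h1, h2.1, h2.2, h3⟩

lemma mem_elim' {δ : List A} {B : Set V} (ht : Tr.mk δ B δ ∈ ξ) :
    δ ∈ Λ.LStar ∧ B ∈ Λ.𝒜 ∧ B ⊆ Λ.rangeL δ ∧ B.Nonempty := by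
  obtain ⟨δ', B', he, h⟩ := mem_elim hξ ht
  cases he
  exact h

lemma filter_up {δ : List A} {B C : Set V} (hB : Tr.mk δ B δ ∈ ξ) (hBC : B ⊆ C)
    (hC : C ∈ Λ.𝒜) (hCr : C ⊆ Λ.rangeL δ) : Tr.mk δ C δ ∈ ξ := by
  obtain ⟨h1, h2, h3, h4⟩ := mem_elim' hξ hB
  refine hξ.2.2.2 _ hB _ (Λ.mk_mem_ESet h1 hC hCr (h4.mono hBC)) ?_
  rw [Λ.tmul_diag_if₁ B C (List.prefix_refl δ)]
  simp only [List.drop_length, relRange_nil]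
  rw [Set.inter_eq_left.mpr hBC, if_pos h4]

lemma filter_inter {δ : List A} {B C : Set V} (hB : Tr.mk δ B δ ∈ ξ)
    (hC : Tr.mk δ C δ ∈ ξ) : Tr.mk δ (B ∩ C) δ ∈ ξ := by
  have hp := hξ.2.2.1 _ hB _ hC
  rw [Λ.tmul_diag_if₁ B C (List.prefix_refl δ)] at hp
  simp only [List.drop_length, relRange_nil] at hp
  split_ifs at hp with h
  · exact hp
  · exact absurd hp (zero_not_mem hξ)

lemma filter_shift_up {δ σ : List A} {C D : Set V} (hD : Tr.mk (δ ++ σ) D (δ ++ σ) ∈ ξ)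
    (hsub : D ⊆ Λ.relRange C σ) (hC : C ∈ Λ.𝒜) (hCr : C ⊆ Λ.rangeL δ) :
    Tr.mk δ C δ ∈ ξ := by
  obtain ⟨h1, h2, h3, h4⟩ := mem_elim' hξ hD
  have hCne : C.Nonempty := Λ.nonempty_of_relRange (h4.mono hsub)
  refine hξ.2.2.2 _ hD _ (Λ.mk_mem_ESet (Λ.prefix_mem_LStar h1 ⟨σ, rfl⟩) hC hCr hCne) ?_
  rw [Λ.tmul_diag_if₂ D C ⟨σ, rfl⟩, List.drop_left]
  rw [Set.inter_eq_left.mpr hsub, if_pos h4]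

lemma filter_shift_prod {δ σ : List A} {C D : Set V} (hC : Tr.mk δ C δ ∈ ξ)
    (hD : Tr.mk (δ ++ σ) D (δ ++ σ) ∈ ξ) :
    Tr.mk (δ ++ σ) (D ∩ Λ.relRange C σ) (δ ++ σ) ∈ ξ := by
  have hp := hξ.2.2.1 _ hC _ hD
  rw [Λ.tmul_diag_if₁ C D ⟨σ, rfl⟩, List.drop_left] at hp
  split_ifs at hp with h
  · rwa [Set.inter_comm] at hp
  · exact absurd hp (zero_not_mem hξ)

lemma words_comparable {δ ε : List A} {B C : Set V} (hB : Tr.mk δ B δ ∈ ξ)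
    (hC : Tr.mk ε C ε ∈ ξ) : δ <+: ε ∨ ε <+: δ := by
  by_contra hc
  push_neg at hc
  have hp := hξ.2.2.1 _ hB _ hC
  rw [Λ.tmul_diag_zero B C hc.1 hc.2] at hp
  exact zero_not_mem hξ hp

lemma filter_level_inter {δ : List A} {B C : Set V} (hB : Tr.mk δ B δ ∈ ξ)
    (hC : Tr.mk [] C [] ∈ ξ) : Tr.mk δ (B ∩ Λ.relRange C δ) δ ∈ ξ :=
  filter_shift_prod hξ hC hB

lemma complete_up (hLS : Λ.IsLS) {b : A} {C D : Set V} (hb : Tr.mk [b] D [b] ∈ ξ)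
    (hC : Tr.mk [] C [] ∈ ξ) : Tr.mk [b] (Λ.relRange C [b]) [b] ∈ ξ := by
  have h1 := filter_shift_prod hξ (σ := [b]) hC hb
  obtain ⟨hb1, hb2, hb3, hb4⟩ := mem_elim' hξ hb
  obtain ⟨hc1, hc2, hc3, hc4⟩ := mem_elim' hξ hC
  exact filter_up hξ h1 Set.inter_subset_right
    (Λ.relRange_mem_A hLS hc2 hb1) (Λ.relRange_subset_rangeL C [b])

lemma complete_down {b : A} {C : Set V} (hb : Tr.mk [b] (Λ.relRange C [b]) [b] ∈ ξ)
    (hC : C ∈ Λ.𝒜) : Tr.mk [] C [] ∈ ξ :=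
  filter_shift_up (δ := []) hξ hb subset_rfl hC (by simp)

end Filters

end LblSp

namespace LblSp

variable {V : Type u} {Ed : Type v} {A : Type w} {Λ : LblSp V Ed A}

lemma prefix_append_drop {δ α : List A} (h : δ <+: α) : δ ++ α.drop δ.length = α := by
  obtain ⟨γ, rfl⟩ := h; rw [List.drop_left]

lemma mem_Hcut_shape {α : List A} (hα0 : α ≠ []) {ξ : Set (Tr V A)} {t : Tr V A}
    (ht : t ∈ Λ.Hcut α ξ) : ∃ δ B, t = Tr.mk δ B δ := by
  rw [Hcut, if_neg hα0] at ht
  obtain ⟨δ, B, rfl, -⟩ := ht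
  exact ⟨δ, B, rfl⟩

lemma mem_Gglue_shape {α : List A} (hα0 : α ≠ []) {ξ : Set (Tr V A)} {t : Tr V A}
    (ht : t ∈ Λ.Gglue α ξ) : ∃ δ B, t = Tr.mk δ B δ := by
  rw [Gglue, if_neg hα0] at ht
  split_ifs at ht
  · obtain ⟨δ, B, rfl, -⟩ := ht
    exact ⟨δ, B, rfl⟩
  · obtain ⟨δ, B, rfl, -⟩ := ht
    exact ⟨δ, B, rfl⟩

lemma Hcut_mono {α : List A} {ξ ξ' : Set (Tr V A)} (h : ξ ⊆ ξ') :
    Λ.Hcut α ξ ⊆ Λ.Hcut α ξ' := by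
  rcases eq_or_ne α [] with rfl | hα0
  · rw [Hcut, if_pos rfl, Hcut, if_pos rfl]; exact h
  · rw [Hcut, if_neg hα0, Hcut, if_neg hα0]
    rintro t ⟨δ, B, rfl, h1, D, h2, h3⟩
    exact ⟨δ, B, rfl, h1, D, h h2, h3⟩

variable {ξ : Set (Tr V A)} (hξ : Λ.IsFilterES ξ) (hLS : Λ.IsLS)
  {α : List A} (hα : α ∈ Λ.LStar) (hα0 : α ≠ [])

include hξ hLS hα0 in
lemma hmem_iff {δ : List A} {B : Set V} :
    Tr.mk δ B δ ∈ Λ.Hcut α ξ ↔ B ∈ Λ.Aset δ ∧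
      Tr.mk (α ++ δ) (B ∩ Λ.rangeL (α ++ δ)) (α ++ δ) ∈ ξ := by
  rw [Hcut, if_neg hα0]
  constructor
  · rintro ⟨δ', B', heq, h1, D, hD, hDB⟩
    rw [Tr.mk.injEq] at heq
    obtain ⟨rfl, rfl, -⟩ := heq
    obtain ⟨hl, hD2, hD3, hD4⟩ := mem_elim' hξ hD
    refine ⟨h1, filter_up hξ hD (Set.subset_inter hDB hD3) ?_ Set.inter_subset_right⟩
    exact hLS.inter_mem _ h1.1 _ (hLS.range_mem _ hl (by simp [hα0]))
  · rintro ⟨h1, h2⟩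
    exact ⟨δ, B, rfl, h1, B ∩ Λ.rangeL (α ++ δ), h2, Set.inter_subset_left⟩

include hξ hLS hα hα0 in
lemma rangeL_mem_Hcut {D : Set V} (hD : Tr.mk α D α ∈ ξ) :
    Tr.mk [] (Λ.rangeL α) [] ∈ Λ.Hcut α ξ := by
  rw [Hcut, if_neg hα0]
  exact ⟨[], Λ.rangeL α, by simp, ⟨hLS.range_mem _ hα hα0, by simp⟩,
    D, by simpa using hD, (mem_elim' hξ hD).2.2.1⟩

include hξ hLS hα hα0 in
lemma gmem_iff (hrα : Tr.mk [] (Λ.rangeL α) [] ∈ ξ) {δ : List A} {B : Set V} :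
    Tr.mk δ B δ ∈ Λ.Gglue α ξ ↔
      ((α <+: δ ∧ α ≠ δ ∧ B ⊆ Λ.rangeL δ ∧
          Tr.mk (δ.drop α.length) B (δ.drop α.length) ∈ ξ) ∨
       (δ <+: α ∧ B ∈ Λ.Aset δ ∧
          Tr.mk [] (Λ.relRange B (α.drop δ.length)) [] ∈ ξ)) := by
  rw [Gglue, if_neg hα0]
  by_cases hw : ∃ (δ₀ : List A) (B₀ : Set V), δ₀ ≠ [] ∧ Tr.mk δ₀ B₀ δ₀ ∈ ξ
  · rw [if_pos hw]
    constructor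
    · rintro ⟨δ', B', heq, hd⟩
      rw [Tr.mk.injEq] at heq
      obtain ⟨rfl, rfl, -⟩ := heq
      rcases hd with ⟨hp, hne, C, hC, rfl⟩ | ⟨hp, hAs, b, C, hC, heq⟩
      · -- first disjunct
        obtain ⟨γ, rfl⟩ := hp
        have hγ : (α ++ γ).drop α.length = γ := List.drop_left
        refine Or.inl ⟨⟨γ, rfl⟩, hne, Set.inter_subset_right, ?_⟩
        rw [hγ] at hC ⊢
        have := filter_level_inter hξ hC hrα
        rwa [← Λ.rangeL_append α γ] at this
      · -- second disjunct
        refine Or.inr ⟨hp, hAs, ?_⟩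
        have h1 := filter_level_inter hξ hC hrα
        rw [← Λ.rangeL_append α [b], ← heq, Λ.relRange_append] at h1
        exact complete_down hξ h1
          (Λ.relRange_mem_A hLS hAs.1 (Λ.drop_mem_LStar hα δ.length))
    · rintro (⟨hp, hne, hsub, hmem⟩ | ⟨hp, hAs, hmem⟩)
      · refine ⟨δ, B, rfl, Or.inl ⟨hp, hne, B, hmem, (Set.inter_eq_left.mpr hsub).symm⟩⟩
      · refine ⟨δ, B, rfl, Or.inr ⟨hp, hAs, ?_⟩⟩
        obtain ⟨δ₀, B₀, hδ₀, hB₀⟩ := hw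
        -- b := head of δ₀
        obtain ⟨b, δt, rfl⟩ : ∃ b δt, δ₀ = b :: δt := by
          cases δ₀ with
          | nil => exact absurd rfl hδ₀
          | cons b δt => exact ⟨b, δt, rfl⟩
        obtain ⟨hl₀, hB₀2, hB₀3, hB₀4⟩ := mem_elim' hξ hB₀
        have hbL : [b] ∈ Λ.LStar := Λ.prefix_mem_LStar hl₀ ⟨δt, rfl⟩
        have hb : Tr.mk [b] (Λ.rangeL [b]) [b] ∈ ξ := by
          refine filter_shift_up (δ := [b]) (σ := δt) hξ hB₀ ?_
            (hLS.range_mem _ hbL (by simp)) subset_rfl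
          rw [← Λ.rangeL_append]
          exact hB₀3
        have h2 := complete_up hξ hLS hb hmem
        rw [← Λ.relRange_append] at h2
        refine ⟨b, Λ.relRange B (α.drop δ.length ++ [b]), h2, ?_⟩
        have : Λ.relRange B (α.drop δ.length ++ [b]) ⊆ Λ.rangeL (α ++ [b]) := by
          have h3 : Λ.relRange B (α.drop δ.length ++ [b]) ⊆
              Λ.relRange (Λ.rangeL δ) (α.drop δ.length ++ [b]) :=
            Λ.relRange_mono hAs.2 _
          rw [← Λ.rangeL_append, ← List.append_assoc, prefix_append_drop hp] at h3
          exact h3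
        exact (Set.inter_eq_left.mpr this).symm
  · rw [if_neg hw]
    have hnorm1 : ¬(α <+: δ ∧ α ≠ δ ∧ B ⊆ Λ.rangeL δ ∧
        Tr.mk (δ.drop α.length) B (δ.drop α.length) ∈ ξ) := by
      rintro ⟨hp, hne, -, hmem⟩
      refine hw ⟨δ.drop α.length, B, ?_, hmem⟩
      intro hc
      apply hne
      have := prefix_append_drop hp
      rw [hc, List.append_nil] at this
      exact this
    constructor
    · rintro ⟨δ', B', heq, hp, hAs, C, hC, heqs⟩
      rw [Tr.mk.injEq] at heq
      obtain ⟨rfl, rfl, -⟩ := heq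
      refine Or.inr ⟨hp, hAs, ?_⟩
      rw [heqs]
      exact filter_inter hξ hC hrα
    · rintro (h | ⟨hp, hAs, hmem⟩)
      · exact absurd h hnorm1
      · refine ⟨δ, B, rfl, hp, hAs, Λ.relRange B (α.drop δ.length), hmem, ?_⟩
        have : Λ.relRange B (α.drop δ.length) ⊆ Λ.rangeL α := by
          have h3 := Λ.relRange_mono hAs.2 (α.drop δ.length)
          rwa [← Λ.rangeL_append, prefix_append_drop hp] at h3
        exact (Set.inter_eq_left.mpr this).symm

end LblSp

namespace LblSp

variable {V : Type u} {Ed : Type v} {A : Type w} {Λ : LblSp V Ed A}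

lemma tmul_eq_self_elim {δ ε : List A} {B C : Set V}
    (h : Λ.tmul (Tr.mk δ B δ) (Tr.mk ε C ε) = Tr.mk δ B δ) :
    ε <+: δ ∧ B ⊆ Λ.relRange C (δ.drop ε.length) := by
  by_cases h2 : ε <+: δ
  · rw [Λ.tmul_diag_if₂ B C h2] at h
    split_ifs at h with hne
    · rw [Tr.mk.injEq] at h
      obtain ⟨-, hBe, -⟩ := h
      exact ⟨h2, by rw [← hBe]; exact Set.inter_subset_right⟩
  · by_cases h1 : δ <+: ε
    · rw [Λ.tmul_diag_if₁ B C h1] at h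
      split_ifs at h with hne
      · rw [Tr.mk.injEq] at h
        exact absurd (h.1 ▸ List.prefix_refl ε) h2
    · rw [Λ.tmul_diag_zero B C h1 h2] at h
      exact absurd h (by simp)

section H

variable {ξ : Set (Tr V A)} (hξ : Λ.IsFilterES ξ) (hW : Λ.IsWLR)
  {α : List A} (hα : α ∈ Λ.LStar) (hα0 : α ≠ []) (hwd : ∃ D, Tr.mk α D α ∈ ξ)

include hξ hW hα hα0 hwd in
lemma Hcut_isFilter : Λ.IsFilterES (Λ.Hcut α ξ) ∧
    Tr.mk [] (Λ.rangeL α) [] ∈ Λ.Hcut α ξ := by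
  have hLS := hW.toIsLS
  obtain ⟨D₀, hD₀⟩ := hwd
  have hr : Tr.mk [] (Λ.rangeL α) [] ∈ Λ.Hcut α ξ :=
    rangeL_mem_Hcut hξ hLS hα hα0 hD₀
  -- membership in ESet
  have hmemE : ∀ t ∈ Λ.Hcut α ξ, t ∈ Λ.ESet ∧ t ≠ Tr.zero := by
    intro t ht
    obtain ⟨δ, B, rfl⟩ := mem_Hcut_shape hα0 ht
    rw [hmem_iff hξ hLS hα0] at ht
    obtain ⟨hAs, h2⟩ := ht
    obtain ⟨hl, h𝒜, hsub, hne⟩ := mem_elim' hξ h2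
    have hBne : B.Nonempty := hne.mono Set.inter_subset_left
    refine ⟨Λ.mk_mem_ESet ?_ hAs.1 hAs.2 hBne, by simp⟩
    rcases eq_or_ne δ [] with rfl | hδ
    · exact Λ.nil_mem_LStar
    · exact Λ.mem_LStar_of_subset hBne hAs.2
  -- key product lemma
  have hkey : ∀ {δ ε : List A} {B C : Set V}, Tr.mk δ B δ ∈ Λ.Hcut α ξ →
      Tr.mk ε C ε ∈ Λ.Hcut α ξ → ε <+: δ →
      (B ∩ Λ.relRange C (δ.drop ε.length)).Nonempty ∧
      Tr.mk δ (B ∩ Λ.relRange C (δ.drop ε.length)) δ ∈ Λ.Hcut α ξ := by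
    intro δ ε B C hB hC hεδ
    set σ := δ.drop ε.length with hσdef
    have hεσ : ε ++ σ = δ := prefix_append_drop hεδ
    rw [hmem_iff hξ hLS hα0] at hB hC
    obtain ⟨hBAs, hB2⟩ := hB
    obtain ⟨hCAs, hC2⟩ := hC
    have hB2' : Tr.mk ((α ++ ε) ++ σ) (B ∩ Λ.rangeL (α ++ δ)) ((α ++ ε) ++ σ) ∈ ξ := by
      rwa [List.append_assoc, hεσ]
    have hw := filter_shift_prod hξ hC2 hB2'
    rw [List.append_assoc, hεσ] at hw
    obtain ⟨hlW, h𝒜W, hsubW, hneW⟩ := mem_elim' hξ hw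
    have hδL : δ ∈ Λ.LStar := Λ.suffix_mem_LStar hlW ⟨α, rfl⟩
    have hWsub : B ∩ Λ.rangeL (α ++ δ) ∩
        Λ.relRange (C ∩ Λ.rangeL (α ++ ε)) σ ⊆ B ∩ Λ.relRange C σ := by
      intro v hv
      exact ⟨hv.1.1, Λ.relRange_mono Set.inter_subset_left σ hv.2⟩
    refine ⟨hneW.mono hWsub, ?_⟩
    rw [hmem_iff hξ hLS hα0]
    have hS𝒜 : B ∩ Λ.relRange C σ ∈ Λ.𝒜 :=
      hLS.inter_mem _ hBAs.1 _ (Λ.relRange_mem_A hLS hCAs.1 (Λ.drop_mem_LStar hδL ε.length))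
    refine ⟨⟨hS𝒜, fun v hv => hBAs.2 hv.1⟩, ?_⟩
    refine filter_up hξ hw (Set.subset_inter ?_ ?_) ?_ Set.inter_subset_right
    · exact fun v hv => hWsub hv
    · exact fun v hv => hv.1.2
    · exact hLS.inter_mem _ hS𝒜 _ (hLS.range_mem _ hlW (by simp [hα0]))
  refine ⟨⟨⟨_, hr⟩, hmemE, ?_, ?_⟩, hr⟩
  · -- products
    intro p hp q hq
    obtain ⟨δ, B, rfl⟩ := mem_Hcut_shape hα0 hp
    obtain ⟨ε, C, rfl⟩ := mem_Hcut_shape hα0 hq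
    have hcomp : δ <+: ε ∨ ε <+: δ := by
      have h1 := ((hmem_iff hξ hLS hα0).mp hp).2
      have h2 := ((hmem_iff hξ hLS hα0).mp hq).2
      rcases words_comparable hξ h1 h2 with h | h
      · exact Or.inl ((List.prefix_append_right_inj α).mp h)
      · exact Or.inr ((List.prefix_append_right_inj α).mp h)
    rcases hcomp with h | h
    · obtain ⟨hne, hmem⟩ := hkey hq hp h
      rw [Λ.tmul_diag_if₁ B C h, if_pos (by rwa [Set.inter_comm])]
      rwa [Set.inter_comm]
    · obtain ⟨hne, hmem⟩ := hkey hp hq h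
      rw [Λ.tmul_diag_if₂ B C h, if_pos hne]
      exact hmem
  · -- upward
    intro p hp q hqE hpq
    obtain ⟨δ, B, rfl⟩ := mem_Hcut_shape hα0 hp
    rcases hqE with rfl | ⟨ε, C, rfl, hεL, hCAs, hCne⟩
    · exact absurd hpq (by simp [tmul])
    obtain ⟨hεδ, hsub⟩ := tmul_eq_self_elim hpq
    set σ := δ.drop ε.length with hσdef
    have hεσ : ε ++ σ = δ := prefix_append_drop hεδ
    have hpm := (hmem_iff hξ hLS hα0).mp hp
    obtain ⟨hBAs, hB2⟩ := hpm
    rw [hmem_iff hξ hLS hα0]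
    refine ⟨hCAs, ?_⟩
    obtain ⟨hlB, h𝒜B, hsubB, hneB⟩ := mem_elim' hξ hB2
    have hαεL : (α ++ ε) ∈ Λ.LStar :=
      Λ.prefix_mem_LStar hlB (by rw [← hεσ, ← List.append_assoc]; exact ⟨σ, rfl⟩)
    have hR𝒜 : Λ.rangeL (α ++ ε) ∈ Λ.𝒜 := hLS.range_mem _ hαεL (by simp [hα0])
    have htgt𝒜 : C ∩ Λ.rangeL (α ++ ε) ∈ Λ.𝒜 := hLS.inter_mem _ hCAs.1 _ hR𝒜
    rcases eq_or_ne σ [] with hσnil | hσne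
    · -- ε = δ
      have hεδ' : ε = δ := by rw [← hεσ, hσnil, List.append_nil]
      subst hεδ'
      rw [hσnil, relRange_nil] at hsub
      refine filter_up hξ hB2 (Set.subset_inter ?_ ?_) htgt𝒜 Set.inter_subset_right
      · exact fun v hv => hsub hv.1
      · exact Set.inter_subset_right
    · have hδL : δ ∈ Λ.LStar := Λ.suffix_mem_LStar hlB ⟨α, rfl⟩
      have hσL : σ ∈ Λ.LStar := Λ.drop_mem_LStar hδL ε.length
      have hB2' : Tr.mk ((α ++ ε) ++ σ) (B ∩ Λ.rangeL (α ++ δ)) ((α ++ ε) ++ σ) ∈ ξ := by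
        rwa [List.append_assoc, hεσ]
      refine filter_shift_up hξ hB2' ?_ htgt𝒜 Set.inter_subset_right
      rw [hW.wlr _ hCAs.1 _ hR𝒜 _ hσL hσne]
      refine Set.subset_inter (fun v hv => hsub hv.1) ?_
      intro v hv
      have : Λ.rangeL (α ++ δ) = Λ.relRange (Λ.rangeL (α ++ ε)) σ := by
        rw [← Λ.rangeL_append, List.append_assoc, hεσ]
      rw [this] at hv
      exact hv.2

end H

section G

variable {ξ : Set (Tr V A)} (hξ : Λ.IsFilterES ξ) (hW : Λ.IsWLR)
  {α : List A} (hα : α ∈ Λ.LStar) (hα0 : α ≠ [])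
  (hrα : Tr.mk [] (Λ.rangeL α) [] ∈ ξ)

include hξ hW hα hα0 hrα in
lemma Gglue_isFilter : Λ.IsFilterES (Λ.Gglue α ξ) ∧
    Tr.mk α (Λ.rangeL α) α ∈ Λ.Gglue α ξ := by
  have hLS := hW.toIsLS
  have gm := fun {δ : List A} {B : Set V} => gmem_iff hξ hLS hα hα0 hrα (δ := δ) (B := B)
  have hαL : Tr.mk α (Λ.rangeL α) α ∈ Λ.Gglue α ξ := by
    rw [gm]
    refine Or.inr ⟨List.prefix_refl α, ⟨hLS.range_mem _ hα hα0, subset_rfl⟩, ?_⟩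
    rwa [List.drop_length, relRange_nil]
  have hmemE : ∀ t ∈ Λ.Gglue α ξ, t ∈ Λ.ESet ∧ t ≠ Tr.zero := by
    intro t ht
    obtain ⟨δ, B, rfl⟩ := mem_Gglue_shape hα0 ht
    rw [gm] at ht
    rcases ht with ⟨hαδ, hne, hsub, h1⟩ | ⟨hδα, hAs, h1⟩
    · obtain ⟨-, h𝒜, -, hBne⟩ := mem_elim' hξ h1
      exact ⟨Λ.mk_mem_ESet (Λ.mem_LStar_of_subset hBne hsub) h𝒜 hsub hBne, by simp⟩
    · obtain ⟨-, -, -, hBne⟩ := mem_elim' hξ h1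
      have hBne' : B.Nonempty := Λ.nonempty_of_relRange hBne
      exact ⟨Λ.mk_mem_ESet (Λ.prefix_mem_LStar hα hδα) hAs.1 hAs.2 hBne', by simp⟩
  have hkey : ∀ {δ ε : List A} {B C : Set V}, Tr.mk δ B δ ∈ Λ.Gglue α ξ →
      Tr.mk ε C ε ∈ Λ.Gglue α ξ → ε <+: δ →
      (B ∩ Λ.relRange C (δ.drop ε.length)).Nonempty ∧
      Tr.mk δ (B ∩ Λ.relRange C (δ.drop ε.length)) δ ∈ Λ.Gglue α ξ := by
    intro δ ε B C hB hC hεδ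
    set σ := δ.drop ε.length with hσdef
    have hεσ : ε ++ σ = δ := prefix_append_drop hεδ
    rcases gm.mp hB with ⟨hαδ, hαδne, hBsub, hB1⟩ | ⟨hδα, hBAs, hB1⟩
    · -- α ⊊ δ
      set δ' := δ.drop α.length with hδ'def
      have hαδ' : α ++ δ' = δ := prefix_append_drop hαδ
      have hSsub : B ∩ Λ.relRange C σ ⊆ Λ.rangeL δ := fun v hv => hBsub hv.1
      rcases gm.mp hC with ⟨hαε, hαεne, hCsub, hC1⟩ | ⟨hεα, hCAs, hC1⟩
      · -- α ⊊ ε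
        set ε' := ε.drop α.length with hε'def
        have hαε' : α ++ ε' = ε := prefix_append_drop hαε
        have hcanc : ε' ++ σ = δ' := by
          apply List.append_cancel_left (as := α)
          rw [← List.append_assoc, hαε', hεσ, hαδ']
        have hB1' : Tr.mk (ε' ++ σ) B (ε' ++ σ) ∈ ξ := by rwa [hcanc]
        have hw := filter_shift_prod hξ hC1 hB1'
        rw [hcanc] at hw
        obtain ⟨-, -, -, hne⟩ := mem_elim' hξ hw
        exact ⟨hne, gm.mpr (Or.inl ⟨hαδ, hαδne, hSsub, hw⟩)⟩
      · -- ε <+: α ⊊ δ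
        set γε := α.drop ε.length with hγεdef
        have hεγ : ε ++ γε = α := prefix_append_drop hεα
        have hσeq : σ = γε ++ δ' := by
          apply List.append_cancel_left (as := ε)
          rw [hεσ, ← List.append_assoc, hεγ, hαδ']
        have hw := filter_level_inter hξ hB1 hC1
        rw [← Λ.relRange_append, ← hσeq] at hw
        obtain ⟨-, -, -, hne⟩ := mem_elim' hξ hw
        exact ⟨hne, gm.mpr (Or.inl ⟨hαδ, hαδne, hSsub, hw⟩)⟩
    · -- δ <+: α, so ε <+: δ <+: α
      set γδ := α.drop δ.length with hγδdef
      have hδγ : δ ++ γδ = α := prefix_append_drop hδα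
      have hεα : ε <+: α := hεδ.trans hδα
      set γε := α.drop ε.length with hγεdef
      have hεγ : ε ++ γε = α := prefix_append_drop hεα
      have hγεeq : γε = σ ++ γδ := by
        apply List.append_cancel_left (as := ε)
        rw [hεγ, ← List.append_assoc, hεσ, hδγ]
      have hC1' : Tr.mk [] (Λ.relRange C γε) [] ∈ ξ := by
        rcases gm.mp hC with ⟨hαε, hαεne, -, -⟩ | ⟨-, -, h⟩
        · exact absurd (hαε.eq_of_length (le_antisymm hαε.length_le hεα.length_le)) hαεne
        · exact h
      have hBAs' := hBAs
      have hδL : δ ∈ Λ.LStar := Λ.prefix_mem_LStar hα hδα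
      have hσL : σ ∈ Λ.LStar := Λ.drop_mem_LStar hδL ε.length
      have hC𝒜 : C ∈ Λ.𝒜 := by
        rcases gm.mp hC with ⟨-, -, -, h⟩ | ⟨-, h, -⟩
        · exact (mem_elim' hξ h).2.1
        · exact h.1
      have hS𝒜 : B ∩ Λ.relRange C σ ∈ Λ.𝒜 :=
        hLS.inter_mem _ hBAs.1 _ (Λ.relRange_mem_A hLS hC𝒜 hσL)
      have hSAs : B ∩ Λ.relRange C σ ∈ Λ.Aset δ :=
        ⟨hS𝒜, fun v hv => hBAs.2 hv.1⟩
      rcases eq_or_ne γδ [] with hγδnil | hγδne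
      · -- δ = α
        rw [hγδnil, List.append_nil] at hδγ
        have hγεσ : γε = σ := by rw [hγεeq, hγδnil, List.append_nil]
        have hB1'' : Tr.mk [] B [] ∈ ξ := by
          rw [hγδnil, relRange_nil] at hB1; exact hB1
        have hC1'' : Tr.mk [] (Λ.relRange C σ) [] ∈ ξ := by rwa [hγεσ] at hC1'
        have hw := filter_inter hξ hB1'' hC1''
        obtain ⟨-, -, -, hne⟩ := mem_elim' hξ hw
        refine ⟨hne, gm.mpr (Or.inr ⟨hδα, hSAs, ?_⟩)⟩
        rw [← hγδdef, hγδnil, relRange_nil]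
        exact hw
      · have hrC𝒜 : Λ.relRange C σ ∈ Λ.𝒜 := Λ.relRange_mem_A hLS hC𝒜 hσL
        have hγδL : γδ ∈ Λ.LStar := Λ.drop_mem_LStar hα δ.length
        have heqW : Λ.relRange (B ∩ Λ.relRange C σ) γδ =
            Λ.relRange B γδ ∩ Λ.relRange C γε := by
          rw [hW.wlr _ hBAs.1 _ hrC𝒜 _ hγδL hγδne, ← Λ.relRange_append, ← hγεeq]
        have hw := filter_inter hξ hB1 hC1'
        rw [← heqW] at hw
        obtain ⟨-, -, -, hne⟩ := mem_elim' hξ hw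
        exact ⟨Λ.nonempty_of_relRange hne, gm.mpr (Or.inr ⟨hδα, hSAs, hw⟩)⟩
  refine ⟨⟨⟨_, hαL⟩, hmemE, ?_, ?_⟩, hαL⟩
  · -- products
    intro p hp q hq
    obtain ⟨δ, B, rfl⟩ := mem_Gglue_shape hα0 hp
    obtain ⟨ε, C, rfl⟩ := mem_Gglue_shape hα0 hq
    have hcomp : δ <+: ε ∨ ε <+: δ := by
      rcases gm.mp hp with ⟨hαδ, -, -, hB1⟩ | ⟨hδα, -, -⟩ <;>
        rcases gm.mp hq with ⟨hαε, -, -, hC1⟩ | ⟨hεα, -, -⟩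
      · rcases words_comparable hξ hB1 hC1 with h | h
        · left
          rw [← prefix_append_drop hαδ, ← prefix_append_drop hαε]
          exact (List.prefix_append_right_inj α).mpr h
        · right
          rw [← prefix_append_drop hαδ, ← prefix_append_drop hαε]
          exact (List.prefix_append_right_inj α).mpr h
      · exact Or.inr (hεα.trans hαδ)
      · exact Or.inl (hδα.trans hαε)
      · exact List.prefix_or_prefix_of_prefix hδα hεα
    rcases hcomp with h | h
    · obtain ⟨hne, hmem⟩ := hkey hq hp h
      rw [Λ.tmul_diag_if₁ B C h, if_pos (by rwa [Set.inter_comm])]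
      rwa [Set.inter_comm]
    · obtain ⟨hne, hmem⟩ := hkey hp hq h
      rw [Λ.tmul_diag_if₂ B C h, if_pos hne]
      exact hmem
  · -- upward
    intro p hp q hqE hpq
    obtain ⟨δ, B, rfl⟩ := mem_Gglue_shape hα0 hp
    rcases hqE with rfl | ⟨ε, C, rfl, hεL, hCAs, hCne⟩
    · exact absurd hpq (by simp [tmul])
    obtain ⟨hεδ, hsub⟩ := tmul_eq_self_elim hpq
    set σ := δ.drop ε.length with hσdef
    have hεσ : ε ++ σ = δ := prefix_append_drop hεδ
    rcases gm.mp hp with ⟨hαδ, hαδne, hBsub, hB1⟩ | ⟨hδα, hBAs, hB1⟩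
    · -- α ⊊ δ
      set δ' := δ.drop α.length with hδ'def
      have hαδ' : α ++ δ' = δ := prefix_append_drop hαδ
      have hεcomp : ε <+: α ∨ α <+: ε := List.prefix_or_prefix_of_prefix hεδ hαδ
      rcases hεcomp with hεα | hαε
      · -- ε <+: α
        set γε := α.drop ε.length with hγεdef
        have hεγ : ε ++ γε = α := prefix_append_drop hεα
        have hσeq : σ = γε ++ δ' := by
          apply List.append_cancel_left (as := ε)
          rw [hεσ, ← List.append_assoc, hεγ, hαδ']
        have hγεL : γε ∈ Λ.LStar := Λ.drop_mem_LStar hα ε.length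
        refine gm.mpr (Or.inr ⟨hεα, hCAs, ?_⟩)
        refine filter_shift_up (δ := []) (σ := δ') hξ hB1 ?_
          (Λ.relRange_mem_A hLS hCAs.1 hγεL) (by simp)
        rw [← Λ.relRange_append, ← hσeq]
        exact hsub
      · -- α <+: ε
        by_cases hαεeq : α = ε
        · subst hαεeq
          have hσδ' : σ = δ' := by rw [hσdef, hδ'def]
          refine gm.mpr (Or.inr ⟨List.prefix_refl α, hCAs, ?_⟩)
          rw [List.drop_length, relRange_nil]
          refine filter_shift_up (δ := []) (σ := δ') hξ hB1 ?_ hCAs.1 (by simp)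
          rwa [← hσδ']
        · set ε' := ε.drop α.length with hε'def
          have hαε' : α ++ ε' = ε := prefix_append_drop hαε
          have hcanc : ε' ++ σ = δ' := by
            apply List.append_cancel_left (as := α)
            rw [← List.append_assoc, hαε', hεσ, hαδ']
          have hB1' : Tr.mk (ε' ++ σ) B (ε' ++ σ) ∈ ξ := by rwa [hcanc]
          refine gm.mpr (Or.inl ⟨hαε, hαεeq, hCAs.2, ?_⟩)
          refine filter_shift_up hξ hB1' hsub hCAs.1 ?_
          calc C ⊆ Λ.rangeL ε := hCAs.2
            _ ⊆ Λ.rangeL ε' := by rw [← hαε']; exact Λ.rangeL_append_subset α ε'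
    · -- δ <+: α
      have hεα : ε <+: α := hεδ.trans hδα
      set γδ := α.drop δ.length with hγδdef
      set γε := α.drop ε.length with hγεdef
      have hδγ : δ ++ γδ = α := prefix_append_drop hδα
      have hεγ : ε ++ γε = α := prefix_append_drop hεα
      have hγεeq : γε = σ ++ γδ := by
        apply List.append_cancel_left (as := ε)
        rw [hεγ, ← List.append_assoc, hεσ, hδγ]
      have hγεL : γε ∈ Λ.LStar := Λ.drop_mem_LStar hα ε.length
      refine gm.mpr (Or.inr ⟨hεα, hCAs, ?_⟩)
      refine filter_up hξ hB1 ?_ (Λ.relRange_mem_A hLS hCAs.1 hγεL) (by simp)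
      calc Λ.relRange B γδ ⊆ Λ.relRange (Λ.relRange C σ) γδ :=
            Λ.relRange_mono hsub γδ
        _ = Λ.relRange C γε := by rw [← Λ.relRange_append, ← hγεeq]

end G

end LblSp

namespace LblSp

variable {V : Type u} {Ed : Type v} {A : Type w} {Λ : LblSp V Ed A}
  {ξ : Set (Tr V A)} (hξ : Λ.IsFilterES ξ) (hW : Λ.IsWLR)
  {α : List A} (hα : α ∈ Λ.LStar) (hα0 : α ≠ [])

include hξ hW hα hα0 in
lemma HG_id (hrα : Tr.mk [] (Λ.rangeL α) [] ∈ ξ) : Λ.Hcut α (Λ.Gglue α ξ) = ξ := by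
  have hLS := hW.toIsLS
  obtain ⟨hGf, hGα⟩ := Gglue_isFilter hξ hW hα hα0 hrα
  ext t
  constructor
  · intro ht
    obtain ⟨δ, B, rfl⟩ := mem_Hcut_shape hα0 ht
    rw [hmem_iff hGf hLS hα0] at ht
    obtain ⟨hAs, h2⟩ := ht
    rw [gmem_iff hξ hLS hα hα0 hrα] at h2
    rcases h2 with ⟨hp, hne, hsub, h3⟩ | ⟨hp, hAs2, h3⟩
    · rw [List.drop_left] at h3
      exact filter_up hξ h3 Set.inter_subset_left hAs.1 hAs.2
    · have hδnil : δ = [] := by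
        have := hp.length_le
        rw [List.length_append] at this
        exact List.length_eq_zero_iff.mp (by omega)
      subst hδnil
      rw [List.append_nil] at h3
      rw [List.drop_length, relRange_nil] at h3
      refine filter_up hξ h3 Set.inter_subset_left hAs.1 (by simp)
  · intro ht
    obtain ⟨δ, B, heq, hl, h𝒜, hsub, hne⟩ := mem_elim hξ ht
    subst heq
    rw [hmem_iff hGf hLS hα0]
    refine ⟨⟨h𝒜, hsub⟩, ?_⟩
    rw [gmem_iff hξ hLS hα hα0 hrα]
    rcases eq_or_ne δ [] with rfl | hδne
    · rw [List.append_nil]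
      refine Or.inr ⟨List.prefix_refl α, ?_, ?_⟩
      · exact ⟨hLS.inter_mem _ h𝒜 _ (hLS.range_mem _ hα hα0), Set.inter_subset_right⟩
      · rw [List.drop_length, relRange_nil]
        exact filter_inter hξ ht hrα
    · refine Or.inl ⟨⟨δ, rfl⟩, ?_, Set.inter_subset_right, ?_⟩
      · intro hc
        have := congrArg List.length hc
        rw [List.length_append] at this
        exact hδne (List.length_eq_zero_iff.mp (by omega))
      · rw [List.drop_left]
        have := filter_level_inter hξ ht hrα
        rwa [← Λ.rangeL_append] at this

include hξ hW hα hα0 in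
lemma GH_id (hwd : ∃ D, Tr.mk α D α ∈ ξ) : Λ.Gglue α (Λ.Hcut α ξ) = ξ := by
  have hLS := hW.toIsLS
  obtain ⟨D, hD⟩ := hwd
  obtain ⟨hHf, hHr⟩ := Hcut_isFilter hξ hW hα hα0 ⟨D, hD⟩
  have gmH := fun {δ : List A} {B : Set V} =>
    gmem_iff hHf hLS hα hα0 hHr (δ := δ) (B := B)
  ext t
  constructor
  · intro ht
    obtain ⟨δ, B, rfl⟩ := mem_Gglue_shape hα0 ht
    rw [gmH] at ht
    rcases ht with ⟨hαδ, hne, hsub, h1⟩ | ⟨hδα, hAs, h1⟩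
    · rw [hmem_iff hξ hLS hα0] at h1
      obtain ⟨-, h2⟩ := h1
      rw [prefix_append_drop hαδ, Set.inter_eq_left.mpr hsub] at h2
      exact h2
    · rw [hmem_iff hξ hLS hα0] at h1
      obtain ⟨-, h2⟩ := h1
      rw [List.append_nil] at h2
      have h2' : Tr.mk (δ ++ α.drop δ.length)
          (Λ.relRange B (α.drop δ.length) ∩ Λ.rangeL α)
          (δ ++ α.drop δ.length) ∈ ξ := by rwa [prefix_append_drop hδα]
      exact filter_shift_up hξ h2' Set.inter_subset_left hAs.1 hAs.2
  · intro ht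
    obtain ⟨δ, B, heq, hl, h𝒜, hsub, hne⟩ := mem_elim hξ ht
    subst heq
    rw [gmH]
    have hcomp := words_comparable hξ ht hD
    have hinr : δ <+: α → (α <+: δ ∧ α ≠ δ ∧ B ⊆ Λ.rangeL δ ∧
          Tr.mk (δ.drop α.length) B (δ.drop α.length) ∈ Λ.Hcut α ξ) ∨
        (δ <+: α ∧ B ∈ Λ.Aset δ ∧
          Tr.mk [] (Λ.relRange B (α.drop δ.length)) [] ∈ Λ.Hcut α ξ) := by
      intro hδα
      set γ := α.drop δ.length with hγdef
      refine Or.inr ⟨hδα, ⟨h𝒜, hsub⟩, ?_⟩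
      rw [hmem_iff hξ hLS hα0]
      have hγL : γ ∈ Λ.LStar := Λ.drop_mem_LStar hα δ.length
      have hr𝒜 : Λ.relRange B γ ∈ Λ.𝒜 := Λ.relRange_mem_A hLS h𝒜 hγL
      refine ⟨⟨hr𝒜, by simp⟩, ?_⟩
      rw [List.append_nil]
      have hD' : Tr.mk (δ ++ γ) D (δ ++ γ) ∈ ξ := by rwa [prefix_append_drop hδα]
      have hw := filter_shift_prod hξ ht hD'
      rw [prefix_append_drop hδα] at hw
      obtain ⟨-, -, hDsub, -⟩ := mem_elim' hξ hD
      refine filter_up hξ hw (Set.subset_inter Set.inter_subset_right ?_) ?_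
        Set.inter_subset_right
      · exact fun v hv => hDsub hv.1
      · exact hLS.inter_mem _ hr𝒜 _ (hLS.range_mem _ hα hα0)
    rcases hcomp with hδα | hαδ
    · exact hinr hδα
    · by_cases heq : α = δ
      · exact hinr (heq ▸ List.prefix_refl δ)
      · refine Or.inl ⟨hαδ, heq, hsub, ?_⟩
        rw [hmem_iff hξ hLS hα0]
        refine ⟨⟨h𝒜, ?_⟩, ?_⟩
        · refine hsub.trans ?_
          conv_lhs => rw [← prefix_append_drop hαδ]
          exact Λ.rangeL_append_subset _ _
        · rw [prefix_append_drop hαδ, Set.inter_eq_left.mpr hsub]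
          exact ht

include hW hα hα0 in
lemma Gglue_mono {ξ' : Set (Tr V A)} (hξ : Λ.IsFilterES ξ) (hξ' : Λ.IsFilterES ξ')
    (hrα : Tr.mk [] (Λ.rangeL α) [] ∈ ξ) (hrα' : Tr.mk [] (Λ.rangeL α) [] ∈ ξ')
    (hss : ξ ⊆ ξ') : Λ.Gglue α ξ ⊆ Λ.Gglue α ξ' := by
  have hLS := hW.toIsLS
  intro t ht
  obtain ⟨δ, B, rfl⟩ := mem_Gglue_shape hα0 ht
  rw [gmem_iff hξ hLS hα hα0 hrα] at ht
  rw [gmem_iff hξ' hLS hα hα0 hrα']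
  rcases ht with ⟨h1, h2, h3, h4⟩ | ⟨h1, h2, h3⟩
  · exact Or.inl ⟨h1, h2, h3, hss h4⟩
  · exact Or.inr ⟨h1, h2, hss h3⟩

include hW hα hα0 in
lemma Gglue_ultra {ζ : Set (Tr V A)} (hζ : Λ.IsUltraES ζ)
    (hrα : Tr.mk [] (Λ.rangeL α) [] ∈ ζ) : Λ.IsUltraES (Λ.Gglue α ζ) := by
  obtain ⟨hGf, hGα⟩ := Gglue_isFilter hζ.1 hW hα hα0 hrα
  refine ⟨hGf, ?_⟩
  intro ζ'' hζ'' hsubs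
  have hwd'' : ∃ D, Tr.mk α D α ∈ ζ'' := ⟨_, hsubs hGα⟩
  have h1 : ζ = Λ.Hcut α (Λ.Gglue α ζ) := (HG_id hζ.1 hW hα hα0 hrα).symm
  have h3 : ζ = Λ.Hcut α ζ'' := by
    refine hζ.2 _ (Hcut_isFilter hζ'' hW hα hα0 hwd'').1 ?_
    rw [h1]
    exact Hcut_mono hsubs
  calc Λ.Gglue α ζ = Λ.Gglue α (Λ.Hcut α ζ'') := by rw [← h3]
    _ = ζ'' := GH_id hζ'' hW hα hα0 hwd''

include hW hα hα0 in
lemma Hcut_ultra {ξ : Set (Tr V A)} (hξ : Λ.IsUltraES ξ)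
    (hwd : ∃ D, Tr.mk α D α ∈ ξ) : Λ.IsUltraES (Λ.Hcut α ξ) := by
  obtain ⟨hHf, hHr⟩ := Hcut_isFilter hξ.1 hW hα hα0 hwd
  refine ⟨hHf, ?_⟩
  intro ζ'' hζ'' hsubs
  have hrα'' : Tr.mk [] (Λ.rangeL α) [] ∈ ζ'' := hsubs hHr
  have h1 : ξ = Λ.Gglue α (Λ.Hcut α ξ) := (GH_id hξ.1 hW hα hα0 hwd).symm
  have h3 : ξ = Λ.Gglue α ζ'' := by
    refine hξ.2 _ (Gglue_isFilter hζ'' hW hα hα0 hrα'').1 ?_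
    rw [h1]
    exact Gglue_mono hW hα hα0 hHf hζ'' hHr hrα'' hsubs
  calc Λ.Hcut α ξ = Λ.Hcut α (Λ.Gglue α ζ'') := by rw [← h3]
    _ = ζ'' := HG_id hζ'' hW hα hα0 hrα''

end LblSp

namespace LblSp

lemma wprefix_wappend_iff {A : Type w} {α γ : List A} {β : Word A} :
    WPrefix γ (wappend α β) ↔
      γ <+: α ∨ (α <+: γ ∧ WPrefix (γ.drop α.length) β) := by
  cases β with
  | inl l =>
    show γ <+: α ++ l ↔ γ <+: α ∨ (α <+: γ ∧ γ.drop α.length <+: l)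
    constructor
    · intro h
      rcases List.prefix_or_prefix_of_prefix h ⟨l, rfl⟩ with h1 | h1
      · exact Or.inl h1
      · refine Or.inr ⟨h1, ?_⟩
        rw [← prefix_append_drop h1] at h
        exact (List.prefix_append_right_inj α).mp h
    · rintro (h | ⟨h1, h2⟩)
      · exact h.trans ⟨l, rfl⟩
      · rw [← prefix_append_drop h1]
        exact (List.prefix_append_right_inj α).mpr h2
  | inr f =>
    show γ = List.ofFn (fun i : Fin γ.length =>
        if h : (i : ℕ) < α.length then α.get ⟨i, h⟩ else f (i - α.length)) ↔
      γ <+: α ∨ (α <+: γ ∧ γ.drop α.length =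
        List.ofFn fun i : Fin (γ.drop α.length).length => f i)
    constructor
    · intro h
      by_cases hle : γ.length ≤ α.length
      · left
        rw [List.prefix_iff_eq_take]
        refine List.ext_getElem (by rw [List.length_take]; omega) ?_
        intro n h1 h2
        rw [List.getElem_take, List.getElem_of_eq h h1, List.getElem_ofFn]
        simp only [List.get_eq_getElem]
        rw [dif_pos (by omega : n < α.length)]
      · right
        push_neg at hle
        have hp : α <+: γ := by
          rw [List.prefix_iff_eq_take]
          refine List.ext_getElem (by rw [List.length_take]; omega) ?_
          intro n h1 h2
          rw [List.getElem_take, List.getElem_of_eq h (by omega : n < γ.length),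
            List.getElem_ofFn]
          simp only [List.get_eq_getElem]
          rw [dif_pos (by omega : n < α.length)]
        refine ⟨hp, ?_⟩
        refine List.ext_getElem (by simp) ?_
        intro n h1 h2
        rw [List.getElem_ofFn, List.getElem_drop,
          List.getElem_of_eq h (by simp at h1 ⊢; omega : α.length + n < γ.length),
          List.getElem_ofFn, dif_neg (by omega : ¬ α.length + n < α.length)]
        simp only [Fin.val_mk]
        congr 1
        omega
    · rintro (h | ⟨h1, h2⟩)
      · refine List.ext_getElem (by simp) ?_
        intro n h1 h2
        rw [List.getElem_ofFn]
        rw [dif_pos (by have := h.length_le; omega : n < α.length)]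
        simp only [List.get_eq_getElem]
        exact h.getElem h1
      · refine List.ext_getElem (by simp) ?_
        intro n hn1 hn2
        rw [List.getElem_ofFn]
        by_cases hna : n < α.length
        · rw [dif_pos hna]
          simp only [List.get_eq_getElem]
          exact (h1.getElem hna).symm
        · rw [dif_neg hna]
          obtain ⟨m, rfl⟩ : ∃ m, n = α.length + m := ⟨n - α.length, by omega⟩
          have hm : m < (γ.drop α.length).length := by simp; omega
          have e1 : γ[α.length + m] = (γ.drop α.length)[m]'hm :=
            List.getElem_drop.symm
          rw [e1, List.getElem_of_eq h2 hm, List.getElem_ofFn]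
          simp only [Fin.val_mk]
          congr 1
          omega

variable {V : Type u} {Ed : Type v} {A : Type w} {Λ : LblSp V Ed A}
  {ξ : Set (Tr V A)} (hξ : Λ.IsFilterES ξ) (hW : Λ.IsWLR)
  {α : List A} (hα : α ∈ Λ.LStar) (hα0 : α ≠ [])

include hξ hα0 in
lemma exists_level_alpha {β : Word A} (hwd : Λ.HasWord ξ (wappend α β)) :
    ∃ D, Tr.mk α D α ∈ ξ :=
  (hwd α hα0).mpr (wprefix_wappend_iff.mpr (Or.inl (List.prefix_refl α)))

include hξ hW hα hα0 in
lemma Gglue_hasWord (hrα : Tr.mk [] (Λ.rangeL α) [] ∈ ξ) {β : Word A}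
    (hwd : Λ.HasWord ξ β) : Λ.HasWord (Λ.Gglue α ξ) (wappend α β) := by
  have hLS := hW.toIsLS
  intro γ hγ0
  rw [wprefix_wappend_iff]
  have havePrefix : γ <+: α → ∃ B, Tr.mk γ B γ ∈ Λ.Gglue α ξ := by
    intro hp
    refine ⟨Λ.rangeL γ, (gmem_iff hξ hLS hα hα0 hrα).mpr (Or.inr ⟨hp,
      ⟨hLS.range_mem _ (Λ.prefix_mem_LStar hα hp) hγ0, subset_rfl⟩, ?_⟩)⟩
    rw [← Λ.rangeL_append, prefix_append_drop hp]
    exact hrα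
  constructor
  · rintro ⟨B, hB⟩
    rw [gmem_iff hξ hLS hα hα0 hrα] at hB
    rcases hB with ⟨hαγ, hne, hsub, h1⟩ | ⟨hγα, hAs, h1⟩
    · refine Or.inr ⟨hαγ, ?_⟩
      have hγ' : γ.drop α.length ≠ [] := by
        intro hc
        apply hne
        have h3 := prefix_append_drop hαγ
        rw [hc, List.append_nil] at h3
        exact h3
      exact (hwd _ hγ').mp ⟨B, h1⟩
    · exact Or.inl hγα
  · rintro (hγα | ⟨hαγ, hwp⟩)
    · exact havePrefix hγα
    · by_cases hγ' : γ.drop α.length = []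
      · have hγeq : α = γ := by
          have h3 := prefix_append_drop hαγ
          rw [hγ', List.append_nil] at h3
          exact h3
        exact havePrefix (hγeq ▸ List.prefix_refl γ)
      · obtain ⟨B', h1⟩ := (hwd _ hγ').mpr hwp
        refine ⟨B' ∩ Λ.rangeL γ, (gmem_iff hξ hLS hα hα0 hrα).mpr
          (Or.inl ⟨hαγ, ?_, Set.inter_subset_right, ?_⟩)⟩
        · intro hc
          apply hγ'
          rw [← hc, List.drop_length]
        · have h2 := filter_level_inter hξ h1 hrα
          rwa [← Λ.rangeL_append, prefix_append_drop hαγ] at h2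

include hξ hW hα hα0 in
lemma Hcut_hasWord {β : Word A} (hwd : Λ.HasWord ξ (wappend α β)) :
    Λ.HasWord (Λ.Hcut α ξ) β := by
  have hLS := hW.toIsLS
  intro γ hγ0
  constructor
  · rintro ⟨B, hB⟩
    rw [hmem_iff hξ hLS hα0] at hB
    have hp : WPrefix (α ++ γ) (wappend α β) := (hwd _ (by simp [hα0])).mp ⟨_, hB.2⟩
    rw [wprefix_wappend_iff] at hp
    rcases hp with hp | ⟨-, hp⟩
    · exfalso
      have := hp.length_le
      rw [List.length_append] at this
      exact hγ0 (List.length_eq_zero_iff.mp (by omega))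
    · rwa [List.drop_left] at hp
  · intro hwp
    have hp : WPrefix (α ++ γ) (wappend α β) :=
      wprefix_wappend_iff.mpr (Or.inr ⟨⟨γ, rfl⟩, by rwa [List.drop_left]⟩)
    obtain ⟨D, hD⟩ := (hwd _ (by simp [hα0])).mpr hp
    obtain ⟨hl, hD𝒜, hDsub, hDne⟩ := mem_elim' hξ hD
    have hγL : γ ∈ Λ.LStar := Λ.suffix_mem_LStar hl ⟨α, rfl⟩
    refine ⟨Λ.rangeL γ, (hmem_iff hξ hLS hα0).mpr
      ⟨⟨hLS.range_mem _ hγL hγ0, subset_rfl⟩, ?_⟩⟩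
    refine filter_up hξ hD (Set.subset_inter
      (hDsub.trans (Λ.rangeL_append_subset α γ)) hDsub) ?_ Set.inter_subset_right
    exact hLS.inter_mem _ (hLS.range_mem _ hγL hγ0) _ (hLS.range_mem _ hl (by simp [hα0]))

end LblSp

namespace LblSp

variable {V : Type u} {Ed : Type v} {A : Type w} {Λ : LblSp V Ed A}

lemma charOf_eq_iff {ξ ζ : Set (Tr V A)} {t : Tr V A} :
    Λ.charOf ζ t = Λ.charOf ξ t ↔ (t ∈ ζ ↔ t ∈ ξ) := by
  unfold charOf
  by_cases h1 : t ∈ ζ <;> by_cases h2 : t ∈ ξ <;> simp [h1, h2]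

section mul

variable {ξ : Set (Tr V A)} (hξ : Λ.IsFilterES ξ)

include hξ in
lemma tmul_mem_iff {e f : Tr V A} (he : e ∈ Λ.ESet) (hf : f ∈ Λ.ESet) :
    Λ.tmul e f ∈ ξ ↔ e ∈ ξ ∧ f ∈ ξ := by
  rcases he with rfl | ⟨δ, B, rfl, hδL, hBAs, hBne⟩
  · show Tr.zero ∈ ξ ↔ _
    simp only [iff_iff_implies_and_implies]
    exact ⟨fun h => absurd h (zero_not_mem hξ),
      fun h => absurd h.1 (zero_not_mem hξ)⟩
  rcases hf with rfl | ⟨ε, C, rfl, hεL, hCAs, hCne⟩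
  · show Tr.zero ∈ ξ ↔ _
    simp only [iff_iff_implies_and_implies]
    exact ⟨fun h => absurd h (zero_not_mem hξ),
      fun h => absurd h.2 (zero_not_mem hξ)⟩
  by_cases h1 : δ <+: ε
  · obtain ⟨ρ, rfl⟩ := h1
    rw [Λ.tmul_diag_if₁ B C ⟨ρ, rfl⟩, List.drop_left]
    split_ifs with hne
    · constructor
      · intro h
        refine ⟨?_, filter_up hξ h Set.inter_subset_right hCAs.1 hCAs.2⟩
        exact filter_shift_up hξ h Set.inter_subset_left hBAs.1 hBAs.2
      · rintro ⟨hB, hC⟩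
        have hp := hξ.2.2.1 _ hB _ hC
        rwa [Λ.tmul_diag_if₁ B C ⟨ρ, rfl⟩, List.drop_left, if_pos hne] at hp
    · simp only [iff_iff_implies_and_implies]
      refine ⟨fun h => absurd h (zero_not_mem hξ), ?_⟩
      rintro ⟨hB, hC⟩
      have hp := hξ.2.2.1 _ hB _ hC
      rw [Λ.tmul_diag_if₁ B C ⟨ρ, rfl⟩, List.drop_left, if_neg hne] at hp
      exact absurd hp (zero_not_mem hξ)
  · by_cases h2 : ε <+: δ
    · obtain ⟨σ, rfl⟩ := h2
      rw [Λ.tmul_diag_if₂ B C ⟨σ, rfl⟩, List.drop_left]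
      split_ifs with hne
      · constructor
        · intro h
          refine ⟨filter_up hξ h Set.inter_subset_left hBAs.1 hBAs.2, ?_⟩
          exact filter_shift_up hξ h Set.inter_subset_right hCAs.1 hCAs.2
        · rintro ⟨hB, hC⟩
          have hp := hξ.2.2.1 _ hB _ hC
          rwa [Λ.tmul_diag_if₂ B C ⟨σ, rfl⟩, List.drop_left, if_pos hne] at hp
      · simp only [iff_iff_implies_and_implies]
        refine ⟨fun h => absurd h (zero_not_mem hξ), ?_⟩
        rintro ⟨hB, hC⟩
        have hp := hξ.2.2.1 _ hB _ hC
        rw [Λ.tmul_diag_if₂ B C ⟨σ, rfl⟩, List.drop_left, if_neg hne] at hp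
        exact absurd hp (zero_not_mem hξ)
    · rw [Λ.tmul_diag_zero B C h1 h2]
      simp only [iff_iff_implies_and_implies]
      refine ⟨fun h => absurd h (zero_not_mem hξ), ?_⟩
      rintro ⟨hB, hC⟩
      exact absurd (words_comparable hξ hB hC) (by tauto)

include hξ in
lemma isChar_charOf : Λ.IsChar (Λ.charOf ξ) := by
  obtain ⟨t0, ht0⟩ := hξ.1
  refine ⟨⟨t0, if_pos ht0⟩, ?_, if_neg (zero_not_mem hξ), ?_⟩
  · intro e he
    exact if_neg (fun hc => he (hξ.2.1 _ hc).1)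
  · intro e he f hf
    have hiff := tmul_mem_iff hξ he hf
    unfold charOf
    by_cases h1 : e ∈ ξ <;> by_cases h2 : f ∈ ξ <;>
      simp [h1, h2, hiff]

end mul

lemma tight_agree {ξ : Set (Tr V A)} (ht : Λ.charOf ξ ∈ Λ.tightSpectrum)
    (E : Finset (Tr V A)) :
    ∃ ζ, Λ.IsUltraES ζ ∧ ∀ t ∈ E, (t ∈ ζ ↔ t ∈ ξ) := by
  have hO : IsOpen ((E : Set (Tr V A)).pi fun t => {Λ.charOf ξ t}) :=
    isOpen_set_pi E.finite_toSet (fun a _ => isOpen_discrete _)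
  obtain ⟨φ, hφO, ζ, hζ, rfl⟩ :=
    mem_closure_iff.mp ht.2 _ hO (Set.mem_pi.mpr fun t _ => rfl)
  refine ⟨ζ, hζ, fun t htE => charOf_eq_iff.mp (Set.mem_pi.mp hφO t htE)⟩

lemma tight_of_agree {η : Set (Tr V A)} (hη : Λ.IsFilterES η)
    (hA : ∀ E : Finset (Tr V A), ∃ ζ, Λ.IsUltraES ζ ∧ ∀ t ∈ E, (t ∈ ζ ↔ t ∈ η)) :
    Λ.charOf η ∈ Λ.tightSpectrum := by
  refine ⟨isChar_charOf hη, ?_⟩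
  rw [mem_closure_iff]
  intro O hO hmem
  obtain ⟨I, u, hIu, hsub⟩ := isOpen_pi_iff.mp hO _ hmem
  obtain ⟨ζ, hζ, hagree⟩ := hA I
  refine ⟨Λ.charOf ζ, hsub (Set.mem_pi.mpr ?_), ζ, hζ, rfl⟩
  intro t htI
  rw [charOf_eq_iff.mpr (hagree t htI)]
  exact (hIu t htI).2

variable (Λ) in
noncomputable def normG (α : List A) : Tr V A → Tr V A := fun t =>
  match t with
  | Tr.mk δ B _ =>
    if α <+: δ ∧ α ≠ δ then Tr.mk (δ.drop α.length) B (δ.drop α.length)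
    else Tr.mk [] (Λ.relRange B (α.drop δ.length)) []
  | t => t

variable (Λ) in
noncomputable def normH (α : List A) : Tr V A → Tr V A := fun t =>
  match t with
  | Tr.mk δ B _ => Tr.mk (α ++ δ) (B ∩ Λ.rangeL (α ++ δ)) (α ++ δ)
  | t => t

variable (hW : Λ.IsWLR) {α : List A} (hα : α ∈ Λ.LStar) (hα0 : α ≠ [])

include hW hα hα0 in
lemma Gglue_tight {ξ : Set (Tr V A)} (hξ : Λ.IsTightFilter ξ)
    (hrα : Tr.mk [] (Λ.rangeL α) [] ∈ ξ) : Λ.IsTightFilter (Λ.Gglue α ξ) := by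
  classical
  have hLS := hW.toIsLS
  have hξf := hξ.1
  obtain ⟨hGf, -⟩ := Gglue_isFilter hξf hW hα hα0 hrα
  refine ⟨hGf, tight_of_agree hGf ?_⟩
  intro E
  obtain ⟨ζ, hζ, hagree⟩ := tight_agree hξ.2
    (E.image (Λ.normG α) ∪ {Tr.mk [] (Λ.rangeL α) []})
  have hrαζ : Tr.mk [] (Λ.rangeL α) [] ∈ ζ :=
    (hagree _ (Finset.mem_union_right _ (Finset.mem_singleton_self _))).mpr hrα
  refine ⟨Λ.Gglue α ζ, Gglue_ultra hW hα hα0 hζ hrαζ, ?_⟩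
  intro t htE
  have hagN : Λ.normG α t ∈ ζ ↔ Λ.normG α t ∈ ξ :=
    hagree _ (Finset.mem_union_left _ (Finset.mem_image_of_mem _ htE))
  match t with
  | Tr.zero =>
    constructor <;> intro h <;>
      · obtain ⟨δ', B', h'⟩ := mem_Gglue_shape hα0 h
        exact absurd h' (by simp)
  | Tr.mk δ B δ₂ =>
    by_cases hδδ : δ = δ₂
    · subst hδδ
      rw [gmem_iff hζ.1 hLS hα hα0 hrαζ, gmem_iff hξf hLS hα hα0 hrα]
      have hnormal : ∀ (h1 : α <+: δ) (h2 : α ≠ δ),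
          Λ.normG α (Tr.mk δ B δ) =
            Tr.mk (δ.drop α.length) B (δ.drop α.length) := by
        intro h1 h2
        simp only [normG]
        rw [if_pos ⟨h1, h2⟩]
      have hnormal2 : δ <+: α →
          Λ.normG α (Tr.mk δ B δ) =
            Tr.mk [] (Λ.relRange B (α.drop δ.length)) [] := by
        intro h1
        simp only [normG]
        rw [if_neg]
        rintro ⟨hc1, hc2⟩
        exact hc2 (hc1.eq_of_length (le_antisymm hc1.length_le h1.length_le))
      constructor <;> rintro (⟨h1, h2, h3, h4⟩ | ⟨h1, h2, h3⟩)
      · refine Or.inl ⟨h1, h2, h3, ?_⟩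
        rw [hnormal h1 h2] at hagN
        exact hagN.mp h4
      · refine Or.inr ⟨h1, h2, ?_⟩
        rw [hnormal2 h1] at hagN
        exact hagN.mp h3
      · refine Or.inl ⟨h1, h2, h3, ?_⟩
        rw [hnormal h1 h2] at hagN
        exact hagN.mpr h4
      · refine Or.inr ⟨h1, h2, ?_⟩
        rw [hnormal2 h1] at hagN
        exact hagN.mpr h3
    · constructor <;> intro h <;>
        · obtain ⟨δ', B', h'⟩ := mem_Gglue_shape hα0 h
          rw [Tr.mk.injEq] at h'
          exact absurd (h'.1.trans h'.2.2.symm) hδδ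

include hW hα hα0 in
lemma Hcut_tight {ξ : Set (Tr V A)} (hξ : Λ.IsTightFilter ξ)
    (hwd : ∃ D, Tr.mk α D α ∈ ξ) : Λ.IsTightFilter (Λ.Hcut α ξ) := by
  classical
  have hLS := hW.toIsLS
  have hξf := hξ.1
  obtain ⟨D₀, hD₀⟩ := hwd
  obtain ⟨hHf, -⟩ := Hcut_isFilter hξf hW hα hα0 ⟨D₀, hD₀⟩
  refine ⟨hHf, tight_of_agree hHf ?_⟩
  intro E
  obtain ⟨ζ, hζ, hagree⟩ := tight_agree hξ.2
    (E.image (Λ.normH α) ∪ {Tr.mk α D₀ α})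
  have hwdζ : ∃ D, Tr.mk α D α ∈ ζ :=
    ⟨D₀, (hagree _ (Finset.mem_union_right _ (Finset.mem_singleton_self _))).mpr hD₀⟩
  refine ⟨Λ.Hcut α ζ, Hcut_ultra hW hα hα0 hζ hwdζ, ?_⟩
  intro t htE
  have hagN : Λ.normH α t ∈ ζ ↔ Λ.normH α t ∈ ξ :=
    hagree _ (Finset.mem_union_left _ (Finset.mem_image_of_mem _ htE))
  match t with
  | Tr.zero =>
    constructor <;> intro h <;>
      · obtain ⟨δ', B', h'⟩ := mem_Hcut_shape hα0 h
        exact absurd h' (by simp)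
  | Tr.mk δ B δ₂ =>
    by_cases hδδ : δ = δ₂
    · subst hδδ
      rw [hmem_iff hζ.1 hLS hα0, hmem_iff hξf hLS hα0]
      have hnormal : Λ.normH α (Tr.mk δ B δ) =
          Tr.mk (α ++ δ) (B ∩ Λ.rangeL (α ++ δ)) (α ++ δ) := rfl
      rw [hnormal] at hagN
      constructor <;> rintro ⟨h1, h2⟩
      · exact ⟨h1, hagN.mp h2⟩
      · exact ⟨h1, hagN.mpr h2⟩
    · constructor <;> intro h <;>
        · obtain ⟨δ', B', h'⟩ := mem_Hcut_shape hα0 h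
          rw [Tr.mk.injEq] at h'
          exact absurd (h'.1.trans h'.2.2.symm) hδδ

end LblSp

namespace LblSp

variable {V : Type u} {Ed : Type v} {A : Type w} (Λ : LblSp V Ed A)

/-- For `α ∈ ℒ^{≥1}` and `β ∈ ℒ^{≤∞}` with `αβ ∈ ℒ^{≤∞}`, the gluing
map `G_{(α)β} : T^{(α)β} → T^{αβ}` is a bijection whose inverse is the cutting map
`H_{[α]β} : T^{αβ} → T^{(α)β}`. -/
theorem statement_18 (hΛ : Λ.IsNormal) (α : List A) (hα : α ∈ Λ.LStar) (hα0 : α ≠ [])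
    (β : Word A) (hβ : Λ.IsWordW β) (hαβ : Λ.IsWordW (wappend α β)) :
    Set.MapsTo (Λ.Gglue α) (Λ.TGlueDom α β) (Λ.TWord (wappend α β)) ∧
    Set.MapsTo (Λ.Hcut α) (Λ.TWord (wappend α β)) (Λ.TGlueDom α β) ∧
    (∀ ξ ∈ Λ.TGlueDom α β, Λ.Hcut α (Λ.Gglue α ξ) = ξ) ∧
    (∀ ξ ∈ Λ.TWord (wappend α β), Λ.Gglue α (Λ.Hcut α ξ) = ξ) := by
  have hW := hΛ.toIsWLR
  refine ⟨?_, ?_, ?_, ?_⟩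
  · rintro ξ ⟨hT, hwd, hrαf⟩
    have hrα := hrαf hα0
    exact ⟨Gglue_tight hW hα hα0 hT hrα, Gglue_hasWord hT.1 hW hα hα0 hrα hwd⟩
  · rintro ξ ⟨hT, hwd⟩
    have hwdα := exists_level_alpha hT.1 hα0 hwd
    exact ⟨Hcut_tight hW hα hα0 hT hwdα, Hcut_hasWord hT.1 hW hα hα0 hwd,
      fun _ => (Hcut_isFilter hT.1 hW hα hα0 hwdα).2⟩
  · rintro ξ ⟨hT, hwd, hrαf⟩
    exact HG_id hT.1 hW hα hα0 (hrαf hα0)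
  · rintro ξ ⟨hT, hwd⟩
    exact GH_id hT.1 hW hα hα0 (exists_level_alpha hT.1 hα0 hwd)

end LblSp
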